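/- Let λ, μ, ν ∈ ℕⁿ be weakly decreasing with |ν| = |λ| + |μ|, let f ∈ B(λ,μ,ν), let d be an f-hive preserving flow class on G, and let φ be a weighted family of complete turnpaths in R_f satisfying in(L,a,φ) = in(L,a,d) and out(L,a,φ) = out(L,a,d) for every f-flatspace L and every side a of L. Then the nonnegative flow d' := Σ_p φ(p)·p on R_f satisfies δ(π(d')) = δ(d). -/

import Mathlib

/-!
Framework for hive flows on the honeycomb graph, following
Bürgisser–Ikenmeyer, "A max-flow algorithm for positivity of
Littlewood-Richardson coefficients".

Vertices of the triangular graph `Δ` with parameter `n` are the points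
`x(m,i)` with `0 ≤ i ≤ m ≤ n` (`m` = row counted from the top, `i` =
position in the row counted from the left).
-/

namespace LRFlows

/-- Edges of the triangular graph `Δ`:
* `dl m i` is the down-left slanted edge from `x(m,i)` to `x(m+1,i)`,
* `dr m i` is the down-right slanted edge from `x(m,i)` to `x(m+1,i+1)`,
* `hz m i` is the horizontal edge from `x(m,i)` to `x(m,i+1)`. -/
inductive EdgeK : Type
  | dl (m i : ℕ)
  | dr (m i : ℕ)
  | hz (m i : ℕ)
  deriving DecidableEq

namespace EdgeK

def valid (n : ℕ) : EdgeK → Prop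
  | dl m i => i ≤ m ∧ m + 1 ≤ n
  | dr m i => i ≤ m ∧ m + 1 ≤ n
  | hz m i => i + 1 ≤ m ∧ m ≤ n

end EdgeK

/-- Hive triangles: `up m i` is the upright triangle with vertices
`x(m,i), x(m+1,i), x(m+1,i+1)`; `down m i` is the downright triangle with
vertices `x(m,i), x(m,i+1), x(m+1,i+1)`. -/
inductive Tri : Type
  | up (m i : ℕ)
  | down (m i : ℕ)
  deriving DecidableEq

namespace Tri

def valid (n : ℕ) : Tri → Prop
  | up m i => i ≤ m ∧ m + 1 ≤ n
  | down m i => i + 1 ≤ m ∧ m + 1 ≤ n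

/-- The three sides of a hive triangle, listed in clockwise order. -/
def sides : Tri → List EdgeK
  | up m i => [.dr m i, .hz (m+1) i, .dl m i]
  | down m i => [.hz m i, .dl m (i+1), .dr m i]

end Tri

/-- `e` is a side of the hive triangle `T`. -/
def sideOf (e : EdgeK) (T : Tri) : Prop := e ∈ T.sides

/-- The side following a given side of a hive triangle in clockwise order
around the triangle. -/
def cwNext : Tri → EdgeK → EdgeK
  | .up m i, e =>
      if e = .dr m i then .hz (m+1) i else if e = .hz (m+1) i then .dl m i else .dr m i
  | .down m i, e =>
      if e = .hz m i then .dl m (i+1) else if e = .dl m (i+1) then .dr m i else .hz m i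

/-- The edges on the right border of `Δ`. -/
def onRight (n : ℕ) (e : EdgeK) : Prop := ∃ m, m + 1 ≤ n ∧ e = .dr m m
/-- The edges on the bottom border of `Δ`. -/
def onBottom (n : ℕ) (e : EdgeK) : Prop := ∃ i, i + 1 ≤ n ∧ e = .hz n i
/-- The edges on the left border of `Δ`. -/
def onLeft (n : ℕ) (e : EdgeK) : Prop := ∃ m, m + 1 ≤ n ∧ e = .dl m 0

/-- The unique upright hive triangle having `e` as a side. -/
def upOf : EdgeK → Tri
  | .dl m i => .up m i
  | .dr m i => .up m i
  | .hz m i => .up (m - 1) i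

/-- The downright hive triangle having `e` as a side, if any. -/
def dnOf? : EdgeK → Option Tri
  | .dl m i => if i = 0 then none else some (.down m (i - 1))
  | .dr m i => some (.down m i)
  | .hz m i => some (.down m i)

/-- A flow class on the honeycomb graph `G`, recorded by its throughput
function `E(Δ) → ℝ`:  `thru k` is the net flow through the white vertex on
the edge `k` into the adjacent upright hive triangle. -/
structure Flow : Type where
  dl : ℕ → ℕ → ℝ
  dr : ℕ → ℕ → ℝ
  hz : ℕ → ℕ → ℝ

namespace Flow

def thru (f : Flow) : EdgeK → ℝ
  | .dl m i => f.dl m i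
  | .dr m i => f.dr m i
  | .hz m i => f.hz m i

end Flow

noncomputable instance : Add Flow :=
  ⟨fun f g => ⟨fun m i => f.dl m i + g.dl m i, fun m i => f.dr m i + g.dr m i,
    fun m i => f.hz m i + g.hz m i⟩⟩

noncomputable instance : SMul ℝ Flow :=
  ⟨fun c f => ⟨fun m i => c * f.dl m i, fun m i => c * f.dr m i, fun m i => c * f.hz m i⟩⟩

/-- A flow class is recorded by its values on the (valid) edges of `Δ` only;
we normalize all other values to `0`, so that flow classes correspond
bijectively to normalized `Flow`s. -/
def Normalized (n : ℕ) (f : Flow) : Prop :=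
  (∀ m i, ¬ (EdgeK.dl m i).valid n → f.dl m i = 0) ∧
  (∀ m i, ¬ (EdgeK.dr m i).valid n → f.dr m i = 0) ∧
  (∀ m i, ¬ (EdgeK.hz m i).valid n → f.hz m i = 0)

/-- Kirchhoff's conservation laws, in throughput form: the throughputs of the
three sides of every hive triangle (measured into the respective upright
triangle) sum to zero. -/
def IsFlow (n : ℕ) (f : Flow) : Prop :=
  (∀ m i, i ≤ m → m + 1 ≤ n → f.dl m i + f.dr m i + f.hz (m + 1) i = 0) ∧
  (∀ m i, i + 1 ≤ m → m + 1 ≤ n → f.hz m i + f.dl m (i + 1) + f.dr m i = 0)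

/-- An integral flow class. -/
def IntegralFlow (f : Flow) : Prop :=
  ∀ m i, (∃ z : ℤ, f.dl m i = (z : ℝ)) ∧ (∃ z : ℤ, f.dr m i = (z : ℝ)) ∧
    (∃ z : ℤ, f.hz m i = (z : ℝ))

/-- A `2^ℓ`-integral flow class. -/
def PowIntegral (l : ℕ) (f : Flow) : Prop :=
  ∀ m i, (∃ z : ℤ, f.dl m i = (z : ℝ) * 2 ^ l) ∧ (∃ z : ℤ, f.dr m i = (z : ℝ) * 2 ^ l) ∧
    (∃ z : ℤ, f.hz m i = (z : ℝ) * 2 ^ l)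

/-- Rhombi (unions of an upright and a downright hive triangle sharing a side),
indexed by the direction of their diagonal:
* `hzD m i` has horizontal diagonal `hz (m+1) i`, triangles `up m i` and `down (m+1) i`;
* `dlD m i` has diagonal `dl m (i+1)`, triangles `up m (i+1)` and `down m i`;
* `drD m i` has diagonal `dr m i`, triangles `up m i` and `down m i`. -/
inductive Rhombus : Type
  | hzD (m i : ℕ)
  | dlD (m i : ℕ)
  | drD (m i : ℕ)
  deriving DecidableEq

namespace Rhombus

def valid (n : ℕ) : Rhombus → Prop
  | hzD m i => i ≤ m ∧ m + 2 ≤ n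
  | dlD m i => i + 1 ≤ m ∧ m + 1 ≤ n
  | drD m i => i + 1 ≤ m ∧ m + 1 ≤ n

/-- The diagonal of a rhombus (joining its two obtuse vertices). -/
def diag : Rhombus → EdgeK
  | hzD m i => .hz (m+1) i
  | dlD m i => .dl m (i+1)
  | drD m i => .dr m i

/-- The upright hive triangle of a rhombus. -/
def triU : Rhombus → Tri
  | hzD m i => .up m i
  | dlD m i => .up m (i+1)
  | drD m i => .up m i

/-- The downright hive triangle of a rhombus. -/
def triD : Rhombus → Tri
  | hzD m i => .down (m+1) i
  | dlD m i => .down m i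
  | drD m i => .down m i

end Rhombus

/-- The slack `σ(ρ,f)` of a rhombus `ρ` with respect to a flow class `f`:
the sum of the values of the corresponding hive function at the two obtuse
vertices minus the sum at the two acute vertices, expressed through the
throughputs of the two sides of `ρ` parallel to one fixed direction. -/
noncomputable def slack (f : Flow) : Rhombus → ℝ
  | .hzD m i => f.dl (m+1) (i+1) - f.dl m i
  | .dlD m i => f.hz (m+1) (i+1) - f.hz m i
  | .drD m i => f.hz m i - f.hz (m+1) i

/-- A hive flow: a flow class all of whose rhombus slacks are nonnegative. -/
def IsHive (n : ℕ) (f : Flow) : Prop :=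
  IsFlow n f ∧ ∀ ρ : Rhombus, ρ.valid n → 0 ≤ slack f ρ

/-- `∑_{i<n} lam i`, i.e. `|λ|` for `λ ∈ ℕⁿ`. -/
def psum (n : ℕ) (lam : ℕ → ℕ) : ℕ := ∑ i ∈ Finset.range n, lam i

/-- `λ, μ, ν ∈ ℕⁿ` are weakly decreasing with `|ν| = |λ| + |μ|`. -/
def PartitionData (n : ℕ) (lam mu nu : ℕ → ℕ) : Prop :=
  (∀ i j, i ≤ j → j + 1 ≤ n → lam j ≤ lam i) ∧
  (∀ i j, i ≤ j → j + 1 ≤ n → mu j ≤ mu i) ∧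
  (∀ i j, i ≤ j → j + 1 ≤ n → nu j ≤ nu i) ∧
  psum n nu = psum n lam + psum n mu

/-- Membership in the polytope `B(λ,μ,ν)` of bounded hive flows.
The `i`-th right border edge from the top is `dr (i-1) (i-1)` with capacity
`λ_i = lam (i-1)`; the `i`-th bottom border edge from the right is
`hz n (n-i)` with capacity `μ_i`; the `i`-th left border edge from the top is
`dl (i-1) 0` with capacity `ν_i`. -/
def MemB (n : ℕ) (lam mu nu : ℕ → ℕ) (f : Flow) : Prop :=
  Normalized n f ∧ IsHive n f ∧
  (∀ m, m + 1 ≤ n → 0 ≤ f.dr m m ∧ f.dr m m ≤ (lam m : ℝ)) ∧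
  (∀ i, i + 1 ≤ n → 0 ≤ f.hz n i ∧ f.hz n i ≤ (mu (n - 1 - i) : ℝ)) ∧
  (∀ m, m + 1 ≤ n → 0 ≤ -(f.dl m 0) ∧ -(f.dl m 0) ≤ (nu m : ℝ))

/-- Membership in the polytope `P(λ,μ,ν)` of capacity achieving hive flows. -/
def MemP (n : ℕ) (lam mu nu : ℕ → ℕ) (f : Flow) : Prop :=
  Normalized n f ∧ IsHive n f ∧
  (∀ m, m + 1 ≤ n → f.dr m m = (lam m : ℝ)) ∧
  (∀ i, i + 1 ≤ n → f.hz n i = (mu (n - 1 - i) : ℝ)) ∧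
  (∀ m, m + 1 ≤ n → -(f.dl m 0) = (nu m : ℝ))

/-- `B(λ,μ,ν)_ℤ`. -/
def MemBZ (n : ℕ) (lam mu nu : ℕ → ℕ) (f : Flow) : Prop :=
  MemB n lam mu nu f ∧ IntegralFlow f

/-- `P(λ,μ,ν)_ℤ`. -/
def MemPZ (n : ℕ) (lam mu nu : ℕ → ℕ) (f : Flow) : Prop :=
  MemP n lam mu nu f ∧ IntegralFlow f

/-- The overall throughput `δ(f)`: the total throughput through the right and
bottom borders of `Δ`. -/
noncomputable def thr (n : ℕ) (f : Flow) : ℝ :=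
  ∑ m ∈ Finset.range n, f.dr m m + ∑ i ∈ Finset.range n, f.hz n i

/-! ### The honeycomb graph `G` -/

/-- Vertices of the honeycomb graph `G`: white vertices on the edges of `Δ`,
black vertices in the hive triangles, a source and a target. -/
inductive GVertex : Type
  | white (e : EdgeK)
  | black (T : Tri)
  | src
  | tgt
  deriving DecidableEq

/-- The adjacency of the directed honeycomb graph `G` (each undirected edge
appears as two opposite directed edges). -/
def GAdj (n : ℕ) (u v : GVertex) : Prop :=
  match u, v with
  | .white e, .black T => e.valid n ∧ T.valid n ∧ sideOf e T
  | .black T, .white e => e.valid n ∧ T.valid n ∧ sideOf e T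
  | .src, .white e => e.valid n ∧ (onRight n e ∨ onBottom n e)
  | .white e, .src => e.valid n ∧ (onRight n e ∨ onBottom n e)
  | .tgt, .white e => e.valid n ∧ onLeft n e
  | .white e, .tgt => e.valid n ∧ onLeft n e
  | _, _ => False

/-- The (cyclically) consecutive pairs of a list. -/
def cyclePairs (l : List GVertex) : List (GVertex × GVertex) := l.zip (l.rotate 1)

/-- A (directed) cycle in `G`, recorded as the list of its pairwise distinct
vertices. -/
def IsGCycle (n : ℕ) (l : List GVertex) : Prop :=
  l ≠ [] ∧ l.Nodup ∧ ∀ p ∈ cyclePairs l, GAdj n p.1 p.2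

/-- A proper cycle uses neither the source nor the target. -/
def ProperCycle (l : List GVertex) : Prop :=
  GVertex.src ∉ l ∧ GVertex.tgt ∉ l

/-- The throughput function of the integral flow class defined by a cycle in `G`. -/
def cycleDelta (l : List GVertex) (e : EdgeK) : ℝ :=
  (if (GVertex.white e, GVertex.black (upOf e)) ∈ cyclePairs l then (1 : ℝ) else 0) -
  (if (GVertex.black (upOf e), GVertex.white e) ∈ cyclePairs l then (1 : ℝ) else 0)

/-- The flow class `f + c` for a cycle `c` in `G`. -/
noncomputable def addCycle (f : Flow) (l : List GVertex) : Flow :=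
  ⟨fun m i => f.dl m i + cycleDelta l (.dl m i),
   fun m i => f.dr m i + cycleDelta l (.dr m i),
   fun m i => f.hz m i + cycleDelta l (.hz m i)⟩

/-- `f` and `g` are neighbours: `g - f` is a proper cycle in `G`. -/
def NeighbourFlow (n : ℕ) (f g : Flow) : Prop :=
  ∃ l : List GVertex, IsGCycle n l ∧ ProperCycle l ∧
    ∀ e : EdgeK, g.thru e - f.thru e = cycleDelta l e

/-- The support of (the reduced representative of) a flow class `d`, as a
relation on directed edges of `G`. -/
def suppEdge (n : ℕ) (d : Flow) (u v : GVertex) : Prop :=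
  match u, v with
  | .white e, .black T =>
      e.valid n ∧ T.valid n ∧ ((T = upOf e ∧ 0 < d.thru e) ∨ (dnOf? e = some T ∧ d.thru e < 0))
  | .black T, .white e =>
      e.valid n ∧ T.valid n ∧ ((T = upOf e ∧ d.thru e < 0) ∨ (dnOf? e = some T ∧ 0 < d.thru e))
  | .src, .white e => e.valid n ∧ (onRight n e ∨ onBottom n e) ∧ 0 < d.thru e
  | .white e, .src => e.valid n ∧ (onRight n e ∨ onBottom n e) ∧ d.thru e < 0
  | .tgt, .white e => e.valid n ∧ onLeft n e ∧ 0 < d.thru e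
  | .white e, .tgt => e.valid n ∧ onLeft n e ∧ d.thru e < 0
  | _, _ => False

/-! ### Turns and slack contributions -/

/-- A turn: a path of length 2 in `G` inside `Δ`, entering a hive triangle
through the white vertex on side `inE` and leaving it through the white vertex
on side `outE`. -/
structure Turn : Type where
  tri : Tri
  inE : EdgeK
  outE : EdgeK
  deriving DecidableEq

namespace Turn

def valid (n : ℕ) (t : Turn) : Prop :=
  t.tri.valid n ∧ sideOf t.inE t.tri ∧ sideOf t.outE t.tri ∧ t.inE ≠ t.outE

end Turn

/-- A turn is counterclockwise iff it goes to the clockwise-next side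
(such a turn rotates counterclockwise around its pivot vertex). -/
def IsCCWTurn (t : Turn) : Prop := t.outE = cwNext t.tri t.inE

/-- A turn is clockwise iff it comes from the clockwise-next side of its exit. -/
def IsCWTurn (t : Turn) : Prop := t.inE = cwNext t.tri t.outE

/-- The side of the triangle of a turn not used by the turn. -/
def thirdSide (t : Turn) : EdgeK :=
  if cwNext t.tri t.outE = t.inE then cwNext t.tri t.inE else cwNext t.tri t.outE

/-- A slack contribution of a rhombus: a single turn (at an acute angle) or a
concatenated pair of turns (around an obtuse angle). -/
inductive Contrib : Type
  | single (t : Turn)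
  | double (t₁ t₂ : Turn)
  deriving DecidableEq

/-- The four negative slack contributions `Ψ₋(ρ)` of a rhombus: the two
counterclockwise turns at the acute angles, and the two clockwise length-4
paths around the obtuse angles. -/
def negContrib (ρ : Rhombus) : Fin 4 → Contrib :=
  ![Contrib.single ⟨ρ.triU, cwNext ρ.triU ρ.diag, cwNext ρ.triU (cwNext ρ.triU ρ.diag)⟩,
    Contrib.single ⟨ρ.triD, cwNext ρ.triD ρ.diag, cwNext ρ.triD (cwNext ρ.triD ρ.diag)⟩,
    Contrib.double ⟨ρ.triU, cwNext ρ.triU ρ.diag, ρ.diag⟩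
      ⟨ρ.triD, ρ.diag, cwNext ρ.triD (cwNext ρ.triD ρ.diag)⟩,
    Contrib.double ⟨ρ.triD, cwNext ρ.triD ρ.diag, ρ.diag⟩
      ⟨ρ.triU, ρ.diag, cwNext ρ.triU (cwNext ρ.triU ρ.diag)⟩]

/-- The four positive slack contributions `Ψ₊(ρ)` of a rhombus: the two
clockwise turns at the acute angles, and the two counterclockwise length-4
paths around the obtuse angles. -/
def posContrib (ρ : Rhombus) : Fin 4 → Contrib :=
  ![Contrib.single ⟨ρ.triU, cwNext ρ.triU (cwNext ρ.triU ρ.diag), cwNext ρ.triU ρ.diag⟩,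
    Contrib.single ⟨ρ.triD, cwNext ρ.triD (cwNext ρ.triD ρ.diag), cwNext ρ.triD ρ.diag⟩,
    Contrib.double ⟨ρ.triD, cwNext ρ.triD (cwNext ρ.triD ρ.diag), ρ.diag⟩
      ⟨ρ.triU, ρ.diag, cwNext ρ.triU ρ.diag⟩,
    Contrib.double ⟨ρ.triU, cwNext ρ.triU (cwNext ρ.triU ρ.diag), ρ.diag⟩
      ⟨ρ.triD, ρ.diag, cwNext ρ.triD ρ.diag⟩]

/-- The antipodal contribution of the `j`-th negative slack contribution of a
rhombus: reverse it and rotate by 180°.  It is a positive contribution. -/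
def antipodalContrib (ρ : Rhombus) : Fin 4 → Contrib :=
  ![posContrib ρ 1, posContrib ρ 0, posContrib ρ 3, posContrib ρ 2]

/-- The directed edges of `G` used by a turn. -/
def turnGEdges (t : Turn) : List (GVertex × GVertex) :=
  [(GVertex.white t.inE, GVertex.black t.tri), (GVertex.black t.tri, GVertex.white t.outE)]

/-- The directed edges of `G` used by a slack contribution. -/
def Contrib.gedges : Contrib → List (GVertex × GVertex)
  | .single t => turnGEdges t
  | .double t₁ t₂ => turnGEdges t₁ ++ turnGEdges t₂

/-- The contribution `c` is contained in the support of the flow class `d`. -/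
def ContribInSupp (n : ℕ) (d : Flow) (c : Contrib) : Prop :=
  ∀ p ∈ c.gedges, suppEdge n d p.1 p.2

/-- The contribution `c` is contained in (the edge set of) the cycle `l`. -/
def ContribInCycle (c : Contrib) (l : List GVertex) : Prop :=
  ∀ p ∈ c.gedges, p ∈ cyclePairs l

/-- A cycle is `f`-hive preserving iff it uses no negative slack contribution
of an `f`-flat rhombus. -/
def CycleHivePreserving (n : ℕ) (f : Flow) (l : List GVertex) : Prop :=
  ∀ ρ : Rhombus, ρ.valid n → slack f ρ = 0 →
    ∀ j : Fin 4, ¬ ContribInCycle (negContrib ρ j) l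

/-- A cycle is `f`-secure iff it is `f`-hive preserving and does not use both
counterclockwise turns at the acute angles of any nearly `f`-flat rhombus. -/
def CycleSecure (n : ℕ) (f : Flow) (l : List GVertex) : Prop :=
  CycleHivePreserving n f l ∧
  ∀ ρ : Rhombus, ρ.valid n → slack f ρ = 1 →
    ¬ (ContribInCycle (negContrib ρ 0) l ∧ ContribInCycle (negContrib ρ 1) l)

/-! ### The digraph `R` and residual digraphs -/

/-- Vertices of the auxiliary digraph `R`: the turns, the source and the target. -/
inductive RVertex : Type
  | turn (t : Turn)
  | src
  | tgt
  deriving DecidableEq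

/-- A turnedge: an ordered pair of turns whose concatenation is a path of
length 4 in `G`. -/
def TurnEdge (t₁ t₂ : Turn) : Prop :=
  t₁.outE = t₂.inE ∧ t₁.tri ≠ t₂.tri ∧ t₁.inE ≠ t₂.outE

/-- Adjacency of the digraph `R`. -/
def RAdj (n : ℕ) (u v : RVertex) : Prop :=
  match u, v with
  | .turn t₁, .turn t₂ => t₁.valid n ∧ t₂.valid n ∧ TurnEdge t₁ t₂
  | .src, .turn t => t.valid n ∧ (onRight n t.inE ∨ onBottom n t.inE)
  | .turn t, .src => t.valid n ∧ (onRight n t.outE ∨ onBottom n t.outE)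
  | .turn t, .tgt => t.valid n ∧ onLeft n t.outE
  | .tgt, .turn t => t.valid n ∧ onLeft n t.inE
  | _, _ => False

/-- A turnvertex deleted in `R_f`: a single-turn negative contribution of an
`f`-flat rhombus. -/
def DelTurn (n : ℕ) (f : Flow) (t : Turn) : Prop :=
  ∃ ρ : Rhombus, ρ.valid n ∧ slack f ρ = 0 ∧ ∃ j : Fin 4, negContrib ρ j = Contrib.single t

/-- A turnedge deleted in `R_f`: a double negative contribution of an
`f`-flat rhombus. -/
def DelTurnEdge (n : ℕ) (f : Flow) (t₁ t₂ : Turn) : Prop :=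
  ∃ ρ : Rhombus, ρ.valid n ∧ slack f ρ = 0 ∧ ∃ j : Fin 4, negContrib ρ j = Contrib.double t₁ t₂

/-- A right or bottom border edge saturated by `f`. -/
def SatRB (n : ℕ) (lam mu : ℕ → ℕ) (f : Flow) (e : EdgeK) : Prop :=
  (∃ m, m + 1 ≤ n ∧ e = EdgeK.dr m m ∧ f.dr m m = (lam m : ℝ)) ∨
  (∃ i, i + 1 ≤ n ∧ e = EdgeK.hz n i ∧ f.hz n i = (mu (n - 1 - i) : ℝ))

/-- A left border edge saturated by `f`. -/
def SatL (n : ℕ) (nu : ℕ → ℕ) (f : Flow) (e : EdgeK) : Prop :=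
  ∃ m, m + 1 ≤ n ∧ e = EdgeK.dl m 0 ∧ -(f.dl m 0) = (nu m : ℝ)

/-- Adjacency of the residual digraph `R_f`. -/
def ResidAdj (n : ℕ) (lam mu nu : ℕ → ℕ) (f : Flow) (u v : RVertex) : Prop :=
  match u, v with
  | .turn t₁, .turn t₂ =>
      RAdj n (.turn t₁) (.turn t₂) ∧ ¬ DelTurn n f t₁ ∧ ¬ DelTurn n f t₂ ∧
        ¬ DelTurnEdge n f t₁ t₂
  | .src, .turn t => RAdj n .src (.turn t) ∧ ¬ DelTurn n f t ∧ ¬ SatRB n lam mu f t.inE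
  | .turn t, .src => RAdj n (.turn t) .src ∧ ¬ DelTurn n f t ∧ ¬ SatRB n lam mu f t.outE
  | .turn t, .tgt => RAdj n (.turn t) .tgt ∧ ¬ DelTurn n f t ∧ ¬ SatL n nu f t.outE
  | .tgt, .turn t => RAdj n .tgt (.turn t) ∧ ¬ DelTurn n f t ∧ ¬ SatL n nu f t.inE
  | _, _ => False

/-- A right or bottom border edge at which an additional unit of `2^ℓ` flow
does not fit. -/
def SatRB2 (n : ℕ) (lam mu : ℕ → ℕ) (f : Flow) (l : ℕ) (e : EdgeK) : Prop :=
  (∃ m, m + 1 ≤ n ∧ e = EdgeK.dr m m ∧ (lam m : ℝ) < f.dr m m + 2 ^ l) ∨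
  (∃ i, i + 1 ≤ n ∧ e = EdgeK.hz n i ∧ (mu (n - 1 - i) : ℝ) < f.hz n i + 2 ^ l)

/-- A left border edge at which an additional unit of `2^ℓ` flow does not fit. -/
def SatL2 (n : ℕ) (nu : ℕ → ℕ) (f : Flow) (l : ℕ) (e : EdgeK) : Prop :=
  ∃ m, m + 1 ≤ n ∧ e = EdgeK.dl m 0 ∧ (nu m : ℝ) < -(f.dl m 0) + 2 ^ l

/-- Adjacency of the residual digraph `R_f^(ℓ)`, obtained from `R_f` by
further deleting the turnedges crossing border edges without room for `2^ℓ`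
additional flow. -/
def ResidAdjL (n : ℕ) (lam mu nu : ℕ → ℕ) (f : Flow) (l : ℕ) (u v : RVertex) : Prop :=
  match u, v with
  | .src, .turn t => ResidAdj n lam mu nu f .src (.turn t) ∧ ¬ SatRB2 n lam mu f l t.inE
  | .turn t, .src => ResidAdj n lam mu nu f (.turn t) .src ∧ ¬ SatRB2 n lam mu f l t.outE
  | .turn t, .tgt => ResidAdj n lam mu nu f (.turn t) .tgt ∧ ¬ SatL2 n nu f l t.outE
  | .tgt, .turn t => ResidAdj n lam mu nu f .tgt (.turn t) ∧ ¬ SatL2 n nu f l t.inE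
  | u, v => ResidAdj n lam mu nu f u v

/-- An `s`-`t`-turnpath for an adjacency relation `A` on `RVertex`. -/
def IsSTPath (A : RVertex → RVertex → Prop) (l : List RVertex) : Prop :=
  l.Nodup ∧ l.Chain' A ∧ l.head? = some RVertex.src ∧ l.getLast? = some RVertex.tgt

/-- A `t`-`s`-turnpath. -/
def IsTSPath (A : RVertex → RVertex → Prop) (l : List RVertex) : Prop :=
  l.Nodup ∧ l.Chain' A ∧ l.head? = some RVertex.tgt ∧ l.getLast? = some RVertex.src

/-- A turncycle (which may pass through `s` or `t`). -/
def IsRCycle (A : RVertex → RVertex → Prop) (l : List RVertex) : Prop :=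
  l ≠ [] ∧ l.Nodup ∧ l.Chain' A ∧
    ∀ a b, l.getLast? = some a → l.head? = some b → A a b

/-- A complete turnpath: an `s`-`t`-turnpath, a `t`-`s`-turnpath, or a
turncycle. -/
def IsCompleteTP (A : RVertex → RVertex → Prop) (l : List RVertex) : Prop :=
  IsSTPath A l ∨ IsTSPath A l ∨ IsRCycle A l

/-- The throughput function of `π(p)` for a complete turnpath `p`
(vertex-distinct, so in/outflow at a turnvertex equals occurrence):
total flow into the two turnvertices pointing from the white vertex of the
edge into its upright triangle, minus the total flow out of the two
turnvertices pointing out of the triangle towards the edge. -/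
def pathDelta (l : List RVertex) (e : EdgeK) : ℝ :=
  (if RVertex.turn ⟨upOf e, e, cwNext (upOf e) e⟩ ∈ l then (1 : ℝ) else 0) +
  (if RVertex.turn ⟨upOf e, e, cwNext (upOf e) (cwNext (upOf e) e)⟩ ∈ l then (1 : ℝ) else 0) -
  (if RVertex.turn ⟨upOf e, cwNext (upOf e) e, e⟩ ∈ l then (1 : ℝ) else 0) -
  (if RVertex.turn ⟨upOf e, cwNext (upOf e) (cwNext (upOf e) e), e⟩ ∈ l then (1 : ℝ) else 0)

/-- The flow class `f + π(p)` for a turnpath `p`. -/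
noncomputable def addPath (f : Flow) (l : List RVertex) : Flow :=
  ⟨fun m i => f.dl m i + pathDelta l (.dl m i),
   fun m i => f.dr m i + pathDelta l (.dr m i),
   fun m i => f.hz m i + pathDelta l (.hz m i)⟩

/-! ### Flatspaces, sides, entrance and exit edges -/

/-- Two hive triangles are `f`-adjacent if they form an `f`-flat rhombus. -/
def FlatAdjTri (n : ℕ) (f : Flow) (T T' : Tri) : Prop :=
  ∃ ρ : Rhombus, ρ.valid n ∧ slack f ρ = 0 ∧
    ((T = ρ.triU ∧ T' = ρ.triD) ∨ (T = ρ.triD ∧ T' = ρ.triU))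

/-- An `f`-flatspace: a connected component of the `f`-adjacency relation on
hive triangles. -/
def IsFlatspace (n : ℕ) (f : Flow) (L : Set Tri) : Prop :=
  ∃ T : Tri, T.valid n ∧ L = {T' | Relation.ReflTransGen (FlatAdjTri n f) T T'}

/-- A valid triangle belonging to `L`. -/
def inL (n : ℕ) (L : Set Tri) (T : Tri) : Prop := T.valid n ∧ T ∈ L

/-- The downright triangle adjacent to `e` exists and belongs to `L`. -/
def dnIn (n : ℕ) (L : Set Tri) (e : EdgeK) : Prop :=
  ∃ T, dnOf? e = some T ∧ inL n L T

/-- A border edge of a set `L` of hive triangles: exactly one of its adjacent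
hive triangles belongs to `L`. -/
def BorderEdge (n : ℕ) (L : Set Tri) (e : EdgeK) : Prop :=
  e.valid n ∧ ((inL n L (upOf e) ∧ ¬ dnIn n L e) ∨ (dnIn n L e ∧ ¬ inL n L (upOf e)))

/-- The collinear successor of an edge of `Δ` along its line. -/
def lineSucc : EdgeK → EdgeK
  | .dl m i => .dl (m+1) i
  | .dr m i => .dr (m+1) (i+1)
  | .hz m i => .hz m (i+1)

/-- A side of `L`: a maximal run of consecutive collinear border edges of `L`. -/
def IsSide (n : ℕ) (L : Set Tri) (s : List EdgeK) : Prop :=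
  s ≠ [] ∧ (∀ e ∈ s, BorderEdge n L e) ∧ s.Chain' (fun a b => b = lineSucc a) ∧
  (∀ e a, s.head? = some a → lineSucc e = a → ¬ BorderEdge n L e) ∧
  (∀ a, s.getLast? = some a → ¬ BorderEdge n L (lineSucc a))

/-- The list recording a side of `L` (in `lineSucc` order) runs clockwise
around `L` (i.e. with the interior of `L` on its right). -/
def sideCW (n : ℕ) (L : Set Tri) (s : List EdgeK) : Prop :=
  ∃ e, s.head? = some e ∧
    (match e with
     | EdgeK.dr _ _ => inL n L (upOf e)
     | _ => dnIn n L e)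

/-- `e` is the entrance edge of the side `s` of `L` (the first edge of the
side in clockwise order around `L`). -/
def entranceOf (n : ℕ) (L : Set Tri) (s : List EdgeK) (e : EdgeK) : Prop :=
  (sideCW n L s ∧ s.head? = some e) ∨ (¬ sideCW n L s ∧ s.getLast? = some e)

/-- `e` is the exit edge of the side `s` of `L` (the last edge of the side in
clockwise order around `L`). -/
def exitOf (n : ℕ) (L : Set Tri) (s : List EdgeK) (e : EdgeK) : Prop :=
  (sideCW n L s ∧ s.getLast? = some e) ∨ (¬ sideCW n L s ∧ s.head? = some e)

open Classical in
/-- The throughput `δ(L,e,d)` of a flow class `d` into `L` through a border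
edge `e` of `L`. -/
noncomputable def inflowEdge (n : ℕ) (L : Set Tri) (d : Flow) (e : EdgeK) : ℝ :=
  if inL n L (upOf e) then d.thru e else -(d.thru e)

/-- `in(L,e,d)`. -/
noncomputable def inPosEdge (n : ℕ) (L : Set Tri) (d : Flow) (e : EdgeK) : ℝ :=
  max (inflowEdge n L d e) 0

/-- `out(L,e,d)`. -/
noncomputable def outPosEdge (n : ℕ) (L : Set Tri) (d : Flow) (e : EdgeK) : ℝ :=
  max (-(inflowEdge n L d e)) 0

/-- `in(L,a,d)`: the `L`-inflow of `d` through the side `a` (given as the list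
of its edges). -/
noncomputable def inSide (n : ℕ) (L : Set Tri) (d : Flow) (s : List EdgeK) : ℝ :=
  (s.map (inPosEdge n L d)).sum

/-- `out(L,a,d)`. -/
noncomputable def outSide (n : ℕ) (L : Set Tri) (d : Flow) (s : List EdgeK) : ℝ :=
  (s.map (outPosEdge n L d)).sum

/-- `v = (m,i)` is a vertex of the hive triangle `T`. -/
def vertexInTri (v : ℕ × ℕ) (T : Tri) : Prop :=
  match T with
  | .up m i => v = (m, i) ∨ v = (m+1, i) ∨ v = (m+1, i+1)
  | .down m i => v = (m, i) ∨ v = (m, i+1) ∨ v = (m+1, i+1)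

/-- The six hive triangles around an interior vertex `x(m,i)`. -/
def sixAround (m i : ℕ) : List Tri :=
  [.up m i, .down m i, .up (m-1) i, .down (m-1) (i-1), .up (m-1) (i-1), .down m (i-1)]

/-- The vertex `x(m,i)` is interior and all six hive triangles around it
belong to `L`. -/
def SurroundedVertex (n : ℕ) (L : Set Tri) (m i : ℕ) : Prop :=
  1 ≤ i ∧ i + 1 ≤ m ∧ m + 1 ≤ n ∧ ∀ T ∈ sixAround m i, T ∈ L

/-- An inner triangle of `L`: all of its vertices are surrounded by triangles
of `L`.  Triangles of `L` that are not inner are the border triangles. -/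
def InnerTri (n : ℕ) (L : Set Tri) (T : Tri) : Prop :=
  ∀ m i, vertexInTri (m, i) T → SurroundedVertex n L m i

/-- The hive triangle adjacent to `thirdSide t` on the other side of the
triangle of `t` belongs to `L`.  (For a counterclockwise turn this is the
rhombus through whose acute angle the turn passes.) -/
def acrossInL (n : ℕ) (L : Set Tri) (t : Turn) : Prop :=
  (upOf (thirdSide t) ≠ t.tri ∧ inL n L (upOf (thirdSide t))) ∨
  (∃ T', dnOf? (thirdSide t) = some T' ∧ T' ≠ t.tri ∧ inL n L T')

/-! ### Weighted families of complete turnpaths -/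

/-- A weighted family of complete turnpaths for the adjacency `A`: a
nonnegative weight on lists of `R`-vertices supported on complete turnpaths. -/
def WeightedFamily (A : RVertex → RVertex → Prop) (φ : List RVertex → ℝ) : Prop :=
  (∀ l, 0 ≤ φ l) ∧ ∀ l, ¬ IsCompleteTP A l → φ l = 0

/-- The turnpath `l` enters `L` by crossing the entrance edge of the side `s`. -/
def EntersVia (n : ℕ) (L : Set Tri) (s : List EdgeK) (l : List RVertex) : Prop :=
  ∃ e, entranceOf n L s e ∧ ∃ t : Turn, RVertex.turn t ∈ l ∧ t.inE = e ∧ inL n L t.tri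

/-- The turnpath `l` exits `L` by crossing the exit edge of the side `s`. -/
def ExitsVia (n : ℕ) (L : Set Tri) (s : List EdgeK) (l : List RVertex) : Prop :=
  ∃ e, exitOf n L s e ∧ ∃ t : Turn, RVertex.turn t ∈ l ∧ t.outE = e ∧ inL n L t.tri

/-- The entrance weight `in(L,a,φ)`. -/
noncomputable def inWeight (n : ℕ) (L : Set Tri) (s : List EdgeK)
    (φ : List RVertex → ℝ) : ℝ :=
  ∑ᶠ l ∈ {l : List RVertex | EntersVia n L s l}, φ l

/-- The exit weight `out(L,a,φ)`. -/
noncomputable def outWeight (n : ℕ) (L : Set Tri) (s : List EdgeK)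
    (φ : List RVertex → ℝ) : ℝ :=
  ∑ᶠ l ∈ {l : List RVertex | ExitsVia n L s l}, φ l

/-- A flow class `d` is `f`-hive preserving if `f + ε d ∈ B(λ,μ,ν)` for all
sufficiently small `ε > 0`. -/
def HivePreserving (n : ℕ) (lam mu nu : ℕ → ℕ) (f d : Flow) : Prop :=
  ∃ ε₀ : ℝ, 0 < ε₀ ∧ ∀ ε : ℝ, 0 < ε → ε ≤ ε₀ → MemB n lam mu nu (f + ε • d)

/-- The throughput of `π(d')` through the edge `e`, for the nonnegative flow
`d' = ∑_p φ(p)·p` on `R_f` determined by a weighted family `φ`. -/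
noncomputable def wDelta (φ : List RVertex → ℝ) (e : EdgeK) : ℝ :=
  ∑ᶠ l : List RVertex, φ l * pathDelta l e

/-- The overall throughput `δ(π(d'))` of the flow `d' = ∑_p φ(p)·p` on `R_f`. -/
noncomputable def piThr (n : ℕ) (φ : List RVertex → ℝ) : ℝ :=
  ∑ m ∈ Finset.range n, wDelta φ (.dr m m) + ∑ i ∈ Finset.range n, wDelta φ (.hz n i)

/-! ### Distance between flow classes -/

/-- The `L₁`-distance between two flow classes: the sum over the edges of `Δ`
of the absolute differences of the throughputs. -/
noncomputable def distFlow (n : ℕ) (f g : Flow) : ℝ :=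
  ∑ m ∈ Finset.range (n+1), ∑ i ∈ Finset.range (n+1),
    ((if i ≤ m ∧ m + 1 ≤ n then |g.dl m i - f.dl m i| else 0) +
     (if i ≤ m ∧ m + 1 ≤ n then |g.dr m i - f.dr m i| else 0) +
     (if i + 1 ≤ m ∧ m ≤ n then |g.hz m i - f.hz m i| else 0))

/-! ### Hives as functions on the vertices of `Δ` -/

/-- A hive on `Δ`: a function on the vertices `x(m,i)` (`i ≤ m ≤ n`) with
`h(x₀) = 0` at the top vertex, such that for every rhombus the sum of the
values at the two obtuse vertices is at least the sum at the two acute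
vertices. -/
def IsHiveFn (n : ℕ) (h : ℕ → ℕ → ℝ) : Prop :=
  h 0 0 = 0 ∧
  (∀ m i, i ≤ m → m + 2 ≤ n → h m i + h (m+2) (i+1) ≤ h (m+1) i + h (m+1) (i+1)) ∧
  (∀ m i, i + 1 ≤ m → m + 1 ≤ n → h m i + h (m+1) (i+2) ≤ h m (i+1) + h (m+1) (i+1)) ∧
  (∀ m i, i + 1 ≤ m → m + 1 ≤ n → h (m+1) i + h m (i+1) ≤ h m i + h (m+1) (i+1))

/-- A vertex of `Δ` lying on the boundary of the big triangle. -/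
def BdryVtx (n : ℕ) (m i : ℕ) : Prop :=
  i ≤ m ∧ m ≤ n ∧ (i = 0 ∨ i = m ∨ m = n)

/-! ### Convex sets and canonical turnpaths -/

/-- Planar coordinates of the vertex `x(m,i)` (up to an affine change of
coordinates, which does not affect convexity). -/
def vtxPoint (m i : ℕ) : ℝ × ℝ := (2 * (i : ℝ) - (m : ℝ), -(m : ℝ))

/-- The closed triangle in the plane corresponding to a hive triangle. -/
def triHull (T : Tri) : Set (ℝ × ℝ) :=
  match T with
  | .up m i => convexHull ℝ {vtxPoint m i, vtxPoint (m+1) i, vtxPoint (m+1) (i+1)}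
  | .down m i => convexHull ℝ {vtxPoint m i, vtxPoint m (i+1), vtxPoint (m+1) (i+1)}

/-- A convex set in the triangular graph `Δ`: a nonempty union of (valid) hive
triangles that is convex as a subset of the plane. -/
def IsConvexSet (n : ℕ) (L : Set Tri) : Prop :=
  L.Nonempty ∧ (∀ T ∈ L, T.valid n) ∧ Convex ℝ (⋃ T ∈ L, triHull T)

/-- The edge `e` belongs to (a triangle of) `L`. -/
def edgeInL (L : Set Tri) (e : EdgeK) : Prop := ∃ T ∈ L, sideOf e T

/-- A hive flow on the convex set `L`: a flow class on the subgraph `G_L`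
(conservation holds at the black vertices of all triangles of `L`; values on
edges outside `L` vanish) whose slack is nonnegative on every rhombus
contained in `L`. -/
def HiveFlowOn (n : ℕ) (L : Set Tri) (d : Flow) : Prop :=
  (∀ m i, Tri.up m i ∈ L → d.dl m i + d.dr m i + d.hz (m+1) i = 0) ∧
  (∀ m i, Tri.down m i ∈ L → d.hz m i + d.dl m (i+1) + d.dr m i = 0) ∧
  (∀ ρ : Rhombus, ρ.valid n → ρ.triU ∈ L → ρ.triD ∈ L → 0 ≤ slack d ρ) ∧
  (∀ e : EdgeK, ¬ edgeInL L e → d.thru e = 0)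

/-- The two endpoints of an edge of `Δ`. -/
def edgeEnds : EdgeK → (ℕ × ℕ) × (ℕ × ℕ)
  | .dl m i => ((m, i), (m+1, i))
  | .dr m i => ((m, i), (m+1, i+1))
  | .hz m i => ((m, i), (m, i+1))

/-- `v` is an obtuse (120°) corner of `L`: exactly two triangles of `L`
contain `v`. -/
def ObtuseCornerAt (n : ℕ) (L : Set Tri) (v : ℕ × ℕ) : Prop :=
  ∃ T₁ T₂ : Tri, T₁ ≠ T₂ ∧ inL n L T₁ ∧ inL n L T₂ ∧
    vertexInTri v T₁ ∧ vertexInTri v T₂ ∧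
    ∀ T, inL n L T → vertexInTri v T → T = T₁ ∨ T = T₂

/-- Some endpoint of `e` is an obtuse corner of `L`. -/
def EndsAtObtuse (n : ℕ) (L : Set Tri) (e : EdgeK) : Prop :=
  ObtuseCornerAt n L (edgeEnds e).1 ∨ ObtuseCornerAt n L (edgeEnds e).2

/-- A canonical turnpath of the convex set `L` (recorded by its list of
turns): either a single clockwise turn at an acute corner of `L`, or a
turnpath through the border triangles of `L`, starting at the entrance edge of
a side and ending at the exit edge of a side, traversing the border of `L`
counterclockwise (every counterclockwise turn closes off a rhombus leaving
`L`), never using two consecutive clockwise turns, and using two consecutive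
counterclockwise turns only to go around an obtuse corner of `L`. -/
def CanonicalTP (n : ℕ) (L : Set Tri) (p : List Turn) : Prop :=
  (∃ t, p = [t] ∧ t.valid n ∧ t.tri ∈ L ∧ IsCWTurn t ∧
    BorderEdge n L t.inE ∧ BorderEdge n L t.outE) ∨
  (2 ≤ p.length ∧
    (∀ t ∈ p, t.valid n ∧ inL n L t.tri ∧ ¬ InnerTri n L t.tri) ∧
    p.Chain' (fun t t' => TurnEdge t t' ∧ ¬ BorderEdge n L t.outE ∧
      ¬ (IsCWTurn t ∧ IsCWTurn t') ∧
      (IsCCWTurn t ∧ IsCCWTurn t' → EndsAtObtuse n L t.outE)) ∧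
    (∀ t ∈ p, IsCCWTurn t → ¬ acrossInL n L t) ∧
    (∀ t, p.head? = some t → ∃ s, IsSide n L s ∧ entranceOf n L s t.inE) ∧
    (∀ t, p.getLast? = some t → ∃ s, IsSide n L s ∧ exitOf n L s t.outE))

/-- A multiset of canonical turnpaths of `L`. -/
def MultisetCanonical (n : ℕ) (L : Set Tri) (φ : List Turn → ℕ) : Prop :=
  ∀ p, φ p ≠ 0 → CanonicalTP n L p

/-- `in(L,a,φ)`: the number, counted with multiplicity, of canonical
turnpaths of `φ` starting at the entrance edge of the side `a = s`. -/
noncomputable def inMs (n : ℕ) (L : Set Tri) (s : List EdgeK) (φ : List Turn → ℕ) : ℝ :=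
  ∑ᶠ p ∈ {p : List Turn | ∃ t, p.head? = some t ∧ entranceOf n L s t.inE}, (φ p : ℝ)

/-- `out(L,a,φ)`: the number, counted with multiplicity, of canonical
turnpaths of `φ` ending at the exit edge of the side `a = s`. -/
noncomputable def outMs (n : ℕ) (L : Set Tri) (s : List EdgeK) (φ : List Turn → ℕ) : ℝ :=
  ∑ᶠ p ∈ {p : List Turn | ∃ t, p.getLast? = some t ∧ exitOf n L s t.outE}, (φ p : ℝ)

end LRFlows

namespace LRFlows
/-! new material -/

noncomputable def hv (f : Flow) (m i : ℕ) : ℝ :=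
  -(∑ k ∈ Finset.range m, f.dl k 0) - ∑ j ∈ Finset.range i, f.hz m j

lemma hv_row (f : Flow) (m i : ℕ) : hv f m (i+1) = hv f m i - f.hz m i := by
  simp only [hv, Finset.sum_range_succ]; ring

lemma hv_D {n : ℕ} (f : Flow) (hf : IsFlow n f) {m : ℕ} (hm : m + 1 ≤ n) :
    ∀ {i : ℕ}, i ≤ m → hv f (m+1) i - hv f m i = -(f.dl m i) := by
  intro i
  induction i with
  | zero =>
      intro _
      simp only [hv, Finset.sum_range_succ, Finset.range_zero, Finset.sum_empty]
      ring
  | succ i ih =>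
      intro hi
      have h1 := hf.1 m i (by omega) hm
      have h2 := hf.2 m i (by omega) hm
      have := ih (by omega)
      rw [hv_row, hv_row]
      linarith

lemma slack_drD (f : Flow) (m i : ℕ) :
    slack f (.drD m i) = hv f m i + hv f (m+1) (i+1) - hv f m (i+1) - hv f (m+1) i := by
  rw [hv_row, hv_row]; simp only [slack]; ring

lemma slack_dlD (f : Flow) (m i : ℕ) :
    slack f (.dlD m i) = hv f m (i+1) + hv f (m+1) (i+1) - hv f m i - hv f (m+1) (i+2) := by
  rw [hv_row, hv_row f (m+1) (i+1), hv_row f (m+1) i]; simp only [slack]; ring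

lemma slack_hzD {n : ℕ} (f : Flow) (hf : IsFlow n f) {m i : ℕ} (hi : i ≤ m) (hm : m + 2 ≤ n) :
    slack f (.hzD m i) = hv f (m+1) i + hv f (m+1) (i+1) - hv f m i - hv f (m+2) (i+1) := by
  have h1 := hv_D f hf (show m + 1 ≤ n by omega) hi
  have h2 := hv_D f hf (show (m+1) + 1 ≤ n by omega) (show i + 1 ≤ m + 1 by omega)
  simp only [slack]; linarith

def AffOn (f : Flow) (a b c : ℝ) (T : Tri) : Prop :=
  ∀ p q : ℕ, vertexInTri (p, q) T → hv f p q = a * p + b * q + c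

lemma aff_base (f : Flow) (T : Tri) : ∃ a b c, AffOn f a b c T := by
  cases T with
  | up m i =>
      refine ⟨hv f (m+1) i - hv f m i, hv f (m+1) (i+1) - hv f (m+1) i,
        hv f m i - (hv f (m+1) i - hv f m i) * m - (hv f (m+1) (i+1) - hv f (m+1) i) * i, ?_⟩
      rintro p q (h | h | h) <;> rw [Prod.mk.injEq] at h <;> obtain ⟨rfl, rfl⟩ := h <;>
        push_cast <;> ring
  | down m i =>
      refine ⟨hv f (m+1) (i+1) - hv f m (i+1), hv f m (i+1) - hv f m i,
        hv f m i - (hv f (m+1) (i+1) - hv f m (i+1)) * m - (hv f m (i+1) - hv f m i) * i, ?_⟩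
      rintro p q (h | h | h) <;> rw [Prod.mk.injEq] at h <;> obtain ⟨rfl, rfl⟩ := h <;>
        push_cast <;> ring

lemma aff_step {n : ℕ} {f : Flow} (hf : IsFlow n f) {T T' : Tri} {a b c : ℝ}
    (h : FlatAdjTri n f T T') (hT : AffOn f a b c T) : AffOn f a b c T' := by
  obtain ⟨ρ, hval, hflat, hor⟩ := h
  cases ρ with
  | drD m i =>
      rw [slack_drD] at hflat
      rcases hor with ⟨rfl, rfl⟩ | ⟨rfl, rfl⟩
      · -- T = up m i, T' = down m i, new vertex (m, i+1)
        have e1 := hT m i (Or.inl rfl)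
        have e2 := hT (m+1) i (Or.inr (Or.inl rfl))
        have e3 := hT (m+1) (i+1) (Or.inr (Or.inr rfl))
        rintro p q (h | h | h) <;> rw [Prod.mk.injEq] at h <;> obtain ⟨rfl, rfl⟩ := h
        · exact e1
        · push_cast at *; linarith
        · exact e3
      · have e1 := hT m i (Or.inl rfl)
        have e2 := hT m (i+1) (Or.inr (Or.inl rfl))
        have e3 := hT (m+1) (i+1) (Or.inr (Or.inr rfl))
        rintro p q (h | h | h) <;> rw [Prod.mk.injEq] at h <;> obtain ⟨rfl, rfl⟩ := h
        · exact e1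
        · push_cast at *; linarith
        · exact e3
  | dlD m i =>
      rw [slack_dlD] at hflat
      rcases hor with ⟨rfl, rfl⟩ | ⟨rfl, rfl⟩
      · -- T = up m (i+1), T' = down m i, new vertex (m, i)
        have e1 := hT m (i+1) (Or.inl rfl)
        have e2 := hT (m+1) (i+1) (Or.inr (Or.inl rfl))
        have e3 := hT (m+1) (i+2) (Or.inr (Or.inr rfl))
        rintro p q (h | h | h) <;> rw [Prod.mk.injEq] at h <;> obtain ⟨rfl, rfl⟩ := h
        · push_cast at *; linarith
        · exact e1
        · exact e2
      · have e1 := hT m i (Or.inl rfl)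
        have e2 := hT m (i+1) (Or.inr (Or.inl rfl))
        have e3 := hT (m+1) (i+1) (Or.inr (Or.inr rfl))
        rintro p q (h | h | h) <;> rw [Prod.mk.injEq] at h <;> obtain ⟨rfl, rfl⟩ := h
        · exact e2
        · exact e3
        · push_cast at *; linarith
  | hzD m i =>
      rw [slack_hzD f hf hval.1 hval.2] at hflat
      rcases hor with ⟨rfl, rfl⟩ | ⟨rfl, rfl⟩
      · -- T = up m i, T' = down (m+1) i, new vertex (m+2, i+1)
        have e1 := hT m i (Or.inl rfl)
        have e2 := hT (m+1) i (Or.inr (Or.inl rfl))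
        have e3 := hT (m+1) (i+1) (Or.inr (Or.inr rfl))
        rintro p q (h | h | h) <;> rw [Prod.mk.injEq] at h <;> obtain ⟨rfl, rfl⟩ := h
        · exact e2
        · exact e3
        · push_cast at *; linarith
      · have e1 := hT (m+1) i (Or.inl rfl)
        have e2 := hT (m+1) (i+1) (Or.inr (Or.inl rfl))
        have e3 := hT (m+2) (i+1) (Or.inr (Or.inr rfl))
        rintro p q (h | h | h) <;> rw [Prod.mk.injEq] at h <;> obtain ⟨rfl, rfl⟩ := h
        · push_cast at *; linarith
        · exact e1
        · exact e2

lemma aff_chain {n : ℕ} {f : Flow} (hf : IsFlow n f) {T T' : Tri} {a b c : ℝ}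
    (h : Relation.ReflTransGen (FlatAdjTri n f) T T') (hT : AffOn f a b c T) :
    AffOn f a b c T' := by
  induction h with
  | refl => exact hT
  | tail _ hstep ih => exact aff_step hf hstep ih

lemma exists_aff_pair {n : ℕ} {f : Flow} (hf : IsFlow n f) {T T' : Tri}
    (h : Relation.ReflTransGen (FlatAdjTri n f) T T') :
    ∃ a b c, AffOn f a b c T ∧ AffOn f a b c T' := by
  obtain ⟨a, b, c, hT⟩ := aff_base f T
  exact ⟨a, b, c, hT, aff_chain hf h hT⟩

lemma L1R {n : ℕ} {f : Flow} (hf : IsFlow n f) {m : ℕ} (hm : m + 2 ≤ n)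
    (h : Relation.ReflTransGen (FlatAdjTri n f) (.up m m) (.up (m+1) (m+1))) :
    slack f (.hzD m m) = 0 ∧ slack f (.dlD (m+1) m) = 0 := by
  obtain ⟨a, b, c, hT, hT'⟩ := exists_aff_pair hf h
  have e1 := hT m m (Or.inl rfl)
  have e2 := hT (m+1) m (Or.inr (Or.inl rfl))
  have e3 := hT (m+1) (m+1) (Or.inr (Or.inr rfl))
  have e4 := hT' (m+2) (m+1) (Or.inr (Or.inl rfl))
  have e5 := hT' (m+2) (m+2) (Or.inr (Or.inr rfl))
  constructor
  · rw [slack_hzD f hf (le_refl m) hm]; push_cast at *; linarith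
  · rw [slack_dlD]; push_cast at *; linarith

lemma L1B {n : ℕ} {f : Flow} (hf : IsFlow n f) {N i : ℕ}
    (h : Relation.ReflTransGen (FlatAdjTri n f) (.up N i) (.up N (i+1))) :
    slack f (.drD N i) = 0 ∧ slack f (.dlD N i) = 0 := by
  obtain ⟨a, b, c, hT, hT'⟩ := exists_aff_pair hf h
  have e1 := hT N i (Or.inl rfl)
  have e2 := hT (N+1) i (Or.inr (Or.inl rfl))
  have e3 := hT (N+1) (i+1) (Or.inr (Or.inr rfl))
  have e4 := hT' N (i+1) (Or.inl rfl)
  have e5 := hT' (N+1) (i+2) (Or.inr (Or.inr rfl))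
  constructor
  · rw [slack_drD]; push_cast at *; linarith
  · rw [slack_dlD]; push_cast at *; linarith


/-! ### Generic lemmas about complete turnpaths -/

lemma head?_eq_some_get {α : Type*} (l : List α) (h : 0 < l.length) :
    l.head? = some (l.get ⟨0, h⟩) := by
  cases l with
  | nil => simp at h
  | cons a l => rfl

lemma getLast?_eq_some_get {α : Type*} (l : List α) (h : 0 < l.length) :
    l.getLast? = some (l.get ⟨l.length - 1, by omega⟩) := by
  have hne : l ≠ [] := List.ne_nil_of_length_pos h
  rw [List.getLast?_eq_getLast hne, List.getLast_eq_getElem]; rfl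

lemma completeTP_nodup {A : RVertex → RVertex → Prop} {l : List RVertex}
    (hl : IsCompleteTP A l) : l.Nodup := by
  rcases hl with h | h | h
  exacts [h.1, h.1, h.2.1]

lemma completeTP_chain {A : RVertex → RVertex → Prop} {l : List RVertex}
    (hl : IsCompleteTP A l) : l.Chain' A := by
  rcases hl with h | h | h
  exacts [h.2.1, h.2.1, h.2.2.1]

lemma exists_pred_of_mem {A : RVertex → RVertex → Prop} {l : List RVertex}
    (hl : IsCompleteTP A l) {t : Turn} (ht : RVertex.turn t ∈ l) :
    ∃ y, A y (RVertex.turn t) := by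
  obtain ⟨⟨j, hj⟩, hget⟩ := List.mem_iff_get.mp ht
  have hchain := completeTP_chain hl
  match j, hj, hget with
  | 0, hj, hget =>
    have hh := head?_eq_some_get l hj
    rw [hget] at hh
    rcases hl with h | h | h
    · rw [h.2.2.1] at hh; simp at hh
    · rw [h.2.2.1] at hh; simp at hh
    · exact ⟨l.getLast h.1, h.2.2.2 _ _ (List.getLast?_eq_getLast h.1) hh⟩
  | (k+1), hj, hget =>
    refine ⟨l.get ⟨k, by omega⟩, ?_⟩
    rw [← hget]
    exact List.isChain_iff_getElem.mp hchain k (by omega)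

lemma exists_succ_of_mem {A : RVertex → RVertex → Prop} {l : List RVertex}
    (hl : IsCompleteTP A l) {t : Turn} (ht : RVertex.turn t ∈ l) :
    ∃ y, A (RVertex.turn t) y := by
  obtain ⟨⟨j, hj⟩, hget⟩ := List.mem_iff_get.mp ht
  have hchain := completeTP_chain hl
  by_cases hlt : j + 1 < l.length
  · refine ⟨l.get ⟨j+1, hlt⟩, ?_⟩
    rw [← hget]
    exact List.isChain_iff_getElem.mp hchain j (by omega)
  · have hj1 : j = l.length - 1 := by omega
    have hlast := getLast?_eq_some_get l (by omega)
    have hgl : l.get ⟨l.length - 1, by omega⟩ = RVertex.turn t := by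
      have e : (⟨l.length - 1, by omega⟩ : Fin l.length) = ⟨j, hj⟩ := Fin.ext (by simp; omega)
      rw [e]; exact hget
    rw [hgl] at hlast
    rcases hl with h | h | h
    · rw [h.2.2.2] at hlast; simp at hlast
    · rw [h.2.2.2] at hlast; simp at hlast
    · refine ⟨l.get ⟨0, by omega⟩, h.2.2.2 _ _ hlast (head?_eq_some_get l (by omega))⟩

lemma pred_position {A : RVertex → RVertex → Prop} {l : List RVertex}
    (hl : IsCompleteTP A l) {t : Turn} (ht : RVertex.turn t ∈ l)
    (hp : ∀ y, A y (RVertex.turn t) → y = RVertex.src) :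
    ∃ (k : ℕ) (hk : k < l.length), l.get ⟨k, hk⟩ = RVertex.src ∧
      ((∃ hk1 : k + 1 < l.length, l.get ⟨k+1, hk1⟩ = RVertex.turn t) ∨
       (k + 1 = l.length ∧ ∃ h0 : 0 < l.length, l.get ⟨0, h0⟩ = RVertex.turn t)) := by
  obtain ⟨⟨j, hj⟩, hget⟩ := List.mem_iff_get.mp ht
  have hchain := completeTP_chain hl
  match j, hj, hget with
  | 0, hj, hget =>
    have hh := head?_eq_some_get l hj
    rw [hget] at hh
    rcases hl with h | h | h
    · rw [h.2.2.1] at hh; simp at hh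
    · rw [h.2.2.1] at hh; simp at hh
    · have hA := h.2.2.2 _ _ (List.getLast?_eq_getLast h.1) hh
      have hsrc := hp _ hA
      refine ⟨l.length - 1, by omega, ?_, Or.inr ⟨by omega, hj, hget⟩⟩
      rw [List.getLast_eq_getElem] at hsrc; exact hsrc
  | (k+1), hj, hget =>
    have hA : A (l.get ⟨k, by omega⟩) (RVertex.turn t) := by
      rw [← hget]; exact List.isChain_iff_getElem.mp hchain k (by omega)
    exact ⟨k, by omega, hp _ hA, Or.inl ⟨hj, hget⟩⟩

lemma succ_position {A : RVertex → RVertex → Prop} {l : List RVertex}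
    (hl : IsCompleteTP A l) {t : Turn} (ht : RVertex.turn t ∈ l)
    (hp : ∀ y, A (RVertex.turn t) y → y = RVertex.src) :
    ∃ (k : ℕ) (hk : k < l.length), l.get ⟨k, hk⟩ = RVertex.src ∧
      ((∃ (j : ℕ) (hj : j < l.length), j + 1 = k ∧ l.get ⟨j, hj⟩ = RVertex.turn t) ∨
       (k = 0 ∧ ∃ hL : l.length - 1 < l.length, l.get ⟨l.length - 1, hL⟩ = RVertex.turn t)) := by
  obtain ⟨⟨j, hj⟩, hget⟩ := List.mem_iff_get.mp ht
  have hchain := completeTP_chain hl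
  by_cases hlt : j + 1 < l.length
  · have hA : A (RVertex.turn t) (l.get ⟨j+1, hlt⟩) := by
      rw [← hget]; exact List.isChain_iff_getElem.mp hchain j (by omega)
    exact ⟨j+1, hlt, hp _ hA, Or.inl ⟨j, hj, rfl, hget⟩⟩
  · have hj1 : j = l.length - 1 := by omega
    have hgl : l.get ⟨l.length - 1, by omega⟩ = RVertex.turn t := by
      have e : (⟨l.length - 1, by omega⟩ : Fin l.length) = ⟨j, hj⟩ := Fin.ext (by simp; omega)
      rw [e]; exact hget
    have hlast := getLast?_eq_some_get l (by omega)
    rw [hgl] at hlast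
    rcases hl with h | h | h
    · rw [h.2.2.2] at hlast; simp at hlast
    · rw [h.2.2.2] at hlast; simp at hlast
    · have hA := h.2.2.2 _ _ hlast (head?_eq_some_get l (by omega))
      exact ⟨0, by omega, hp _ hA, Or.inr ⟨rfl, by omega, hgl⟩⟩

lemma pred_src_unique {A : RVertex → RVertex → Prop} {l : List RVertex}
    (hl : IsCompleteTP A l) {t₁ t₂ : Turn}
    (h₁ : RVertex.turn t₁ ∈ l) (h₂ : RVertex.turn t₂ ∈ l)
    (hp₁ : ∀ y, A y (RVertex.turn t₁) → y = RVertex.src)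
    (hp₂ : ∀ y, A y (RVertex.turn t₂) → y = RVertex.src) : t₁ = t₂ := by
  obtain ⟨k1, hk1, hs1, hd1⟩ := pred_position hl h₁ hp₁
  obtain ⟨k2, hk2, hs2, hd2⟩ := pred_position hl h₂ hp₂
  have hinj := List.nodup_iff_injective_get.mp (completeTP_nodup hl)
  have hk : k1 = k2 := congrArg Fin.val (hinj (hs1.trans hs2.symm))
  subst hk
  rcases hd1 with ⟨p1, e1⟩ | ⟨q1, h01, e1⟩ <;> rcases hd2 with ⟨p2, e2⟩ | ⟨q2, h02, e2⟩
  · have : RVertex.turn t₁ = RVertex.turn t₂ := by rw [← e1, ← e2]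
    exact RVertex.turn.inj this
  · omega
  · omega
  · have : RVertex.turn t₁ = RVertex.turn t₂ := by rw [← e1, ← e2]
    exact RVertex.turn.inj this

lemma succ_src_unique {A : RVertex → RVertex → Prop} {l : List RVertex}
    (hl : IsCompleteTP A l) {t₁ t₂ : Turn}
    (h₁ : RVertex.turn t₁ ∈ l) (h₂ : RVertex.turn t₂ ∈ l)
    (hp₁ : ∀ y, A (RVertex.turn t₁) y → y = RVertex.src)
    (hp₂ : ∀ y, A (RVertex.turn t₂) y → y = RVertex.src) : t₁ = t₂ := by
  obtain ⟨k1, hk1, hs1, hd1⟩ := succ_position hl h₁ hp₁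
  obtain ⟨k2, hk2, hs2, hd2⟩ := succ_position hl h₂ hp₂
  have hinj := List.nodup_iff_injective_get.mp (completeTP_nodup hl)
  have hk : k1 = k2 := congrArg Fin.val (hinj (hs1.trans hs2.symm))
  subst hk
  rcases hd1 with ⟨j1, hj1, e11, e1⟩ | ⟨q1, h01, e1⟩ <;>
    rcases hd2 with ⟨j2, hj2, e22, e2⟩ | ⟨q2, h02, e2⟩
  · have hj : j1 = j2 := by omega
    subst hj
    have : RVertex.turn t₁ = RVertex.turn t₂ := by rw [← e1, ← e2]
    exact RVertex.turn.inj this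
  · omega
  · omega
  · have : RVertex.turn t₁ = RVertex.turn t₂ := by rw [← e1, ← e2]
    exact RVertex.turn.inj this

/-! chunk 3 -/

lemma sideOf_dr {m i : ℕ} {T : Tri} (h : sideOf (.dr m i) T) :
    T = .up m i ∨ T = .down m i := by
  cases T with
  | up a b =>
      simp only [sideOf, Tri.sides, List.mem_cons, List.mem_singleton, List.not_mem_nil,
        or_false] at h
      rcases h with h | h | h <;> simp_all
  | down a b =>
      simp only [sideOf, Tri.sides, List.mem_cons, List.mem_singleton, List.not_mem_nil,
        or_false] at h
      rcases h with h | h | h <;> simp_all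

lemma sideOf_dl {m i : ℕ} {T : Tri} (h : sideOf (.dl m i) T) :
    T = .up m i ∨ ∃ j, i = j + 1 ∧ T = .down m j := by
  cases T with
  | up a b =>
      simp only [sideOf, Tri.sides, List.mem_cons, List.mem_singleton, List.not_mem_nil,
        or_false] at h
      rcases h with h | h | h <;> simp_all
  | down a b =>
      simp only [sideOf, Tri.sides, List.mem_cons, List.mem_singleton, List.not_mem_nil,
        or_false] at h
      rcases h with h | h | h <;> simp_all

lemma sideOf_hz {m i : ℕ} {T : Tri} (h : sideOf (.hz m i) T) :
    (∃ k, m = k + 1 ∧ T = .up k i) ∨ T = .down m i := by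
  cases T with
  | up a b =>
      simp only [sideOf, Tri.sides, List.mem_cons, List.mem_singleton, List.not_mem_nil,
        or_false] at h
      rcases h with h | h | h <;> simp_all
  | down a b =>
      simp only [sideOf, Tri.sides, List.mem_cons, List.mem_singleton, List.not_mem_nil,
        or_false] at h
      rcases h with h | h | h <;> simp_all

lemma finite_validTri (n : ℕ) : {T : Tri | T.valid n}.Finite := by
  have hfin : ((Set.Iic n) ×ˢ (Set.Iic n) : Set (ℕ × ℕ)).Finite :=
    (Set.finite_Iic n).prod (Set.finite_Iic n)
  apply Set.Finite.subset ((hfin.image (fun p : ℕ × ℕ => Tri.up p.1 p.2)).union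
    (hfin.image (fun p : ℕ × ℕ => Tri.down p.1 p.2)))
  rintro T hT
  cases T with
  | up m i =>
      obtain ⟨h1, h2⟩ := hT
      exact Or.inl ⟨(m, i), ⟨by simp; omega, by simp; omega⟩, rfl⟩
  | down m i =>
      obtain ⟨h1, h2⟩ := hT
      exact Or.inr ⟨(m, i), ⟨by simp; omega, by simp; omega⟩, rfl⟩

lemma finite_validTurn (n : ℕ) : {t : Turn | t.valid n}.Finite := by
  set ES : Set EdgeK := ⋃ T ∈ {T : Tri | T.valid n}, {e | e ∈ T.sides} with hES
  have hESfin : ES.Finite :=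
    Set.Finite.biUnion (finite_validTri n) (fun T _ => T.sides.finite_toSet)
  have hprod : ({T : Tri | T.valid n} ×ˢ (ES ×ˢ ES)).Finite :=
    (finite_validTri n).prod (hESfin.prod hESfin)
  apply Set.Finite.subset (hprod.image (fun x : Tri × EdgeK × EdgeK => Turn.mk x.1 x.2.1 x.2.2))
  rintro t ht
  refine ⟨(t.tri, t.inE, t.outE), ⟨ht.1, ⟨?_, ?_⟩⟩, rfl⟩
  · exact Set.mem_biUnion ht.1 ht.2.1
  · exact Set.mem_biUnion ht.1 ht.2.2.1

def validRV (n : ℕ) : Set RVertex :=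
  insert RVertex.src (insert RVertex.tgt (RVertex.turn '' {t | t.valid n}))

lemma finite_validRV (n : ℕ) : (validRV n).Finite := by
  apply Set.Finite.insert
  apply Set.Finite.insert
  exact (finite_validTurn n).image _

lemma suppφ_finite {n : ℕ} {A : RVertex → RVertex → Prop} {φ : List RVertex → ℝ}
    (hval : ∀ y (t : Turn), A y (RVertex.turn t) → Turn.valid n t)
    (hφ : ∀ l, ¬ IsCompleteTP A l → φ l = 0) :
    (Function.support φ).Finite := by
  have hV := finite_validRV n
  haveI : Fintype ↥(validRV n) := hV.fintype
  set C := Fintype.card ↥(validRV n) with hC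
  have hlen : {l' : List ↥(validRV n) | l'.length ≤ C}.Finite := List.finite_length_le _ C
  apply Set.Finite.subset (hlen.image (List.map (Subtype.val : ↥(validRV n) → RVertex)))
  intro l hl
  have hTP : IsCompleteTP A l := by
    by_contra hc
    exact hl (hφ l hc)
  have hmem : ∀ x ∈ l, x ∈ validRV n := by
    intro x hx
    cases x with
    | src => exact Set.mem_insert _ _
    | tgt => exact Set.mem_insert_of_mem _ (Set.mem_insert _ _)
    | turn t =>
        obtain ⟨y, hy⟩ := exists_pred_of_mem hTP hx
        exact Set.mem_insert_of_mem _ (Set.mem_insert_of_mem _ ⟨t, hval _ _ hy, rfl⟩)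
  set l' : List ↥(validRV n) := List.pmap (fun x hx => (⟨x, hx⟩ : ↥(validRV n))) l hmem with hl'
  have hmap : List.map Subtype.val l' = l := by
    rw [hl', List.map_pmap]
    exact (List.pmap_eq_map _).trans (List.map_id l)
  refine ⟨l', ?_, hmap⟩
  have hnd : l'.Nodup := by
    apply List.Nodup.of_map Subtype.val
    rw [hmap]; exact completeTP_nodup hTP
  simpa [hC] using hnd.length_le_card


/-! cwNext computations -/

lemma cwNext_up_dr (m i : ℕ) : cwNext (.up m i) (.dr m i) = .hz (m+1) i := by simp [cwNext]
lemma cwNext_up_hz (m i : ℕ) : cwNext (.up m i) (.hz (m+1) i) = .dl m i := by simp [cwNext]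
lemma cwNext_up_dl (m i : ℕ) : cwNext (.up m i) (.dl m i) = .dr m i := by simp [cwNext]
lemma cwNext_down_hz (m i : ℕ) : cwNext (.down m i) (.hz m i) = .dl m (i+1) := by simp [cwNext]
lemma cwNext_down_dl (m i : ℕ) : cwNext (.down m i) (.dl m (i+1)) = .dr m i := by simp [cwNext]
lemma cwNext_down_dr (m i : ℕ) : cwNext (.down m i) (.dr m i) = .hz m i := by simp [cwNext]

lemma negContrib_hzD_0 (m i : ℕ) :
    negContrib (.hzD m i) 0 = .single ⟨.up m i, .dl m i, .dr m i⟩ := by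
  simp [negContrib, Rhombus.triU, Rhombus.triD, Rhombus.diag,
    cwNext_up_hz, cwNext_up_dl]

lemma negContrib_hzD_1 (m i : ℕ) :
    negContrib (.hzD m i) 1 = .single ⟨.down (m+1) i, .dl (m+1) (i+1), .dr (m+1) i⟩ := by
  simp [negContrib, Rhombus.triU, Rhombus.triD, Rhombus.diag,
    cwNext_down_hz, cwNext_down_dl]

lemma negContrib_hzD_3 (m i : ℕ) :
    negContrib (.hzD m i) 3 = .double ⟨.down (m+1) i, .dl (m+1) (i+1), .hz (m+1) i⟩
      ⟨.up m i, .hz (m+1) i, .dr m i⟩ := by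
  simp [negContrib, Rhombus.triU, Rhombus.triD, Rhombus.diag,
    cwNext_down_hz, cwNext_up_hz, cwNext_up_dl]

lemma negContrib_dlD_0 (m i : ℕ) :
    negContrib (.dlD m i) 0 = .single ⟨.up m (i+1), .dr m (i+1), .hz (m+1) (i+1)⟩ := by
  simp [negContrib, Rhombus.triU, Rhombus.triD, Rhombus.diag,
    cwNext_up_dl, cwNext_up_dr]

lemma negContrib_dlD_1 (m i : ℕ) :
    negContrib (.dlD m i) 1 = .single ⟨.down m i, .dr m i, .hz m i⟩ := by
  simp [negContrib, Rhombus.triU, Rhombus.triD, Rhombus.diag,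
    cwNext_down_dl, cwNext_down_dr]

lemma negContrib_dlD_2 (m i : ℕ) :
    negContrib (.dlD m i) 2 = .double ⟨.up m (i+1), .dr m (i+1), .dl m (i+1)⟩
      ⟨.down m i, .dl m (i+1), .hz m i⟩ := by
  simp [negContrib, Rhombus.triU, Rhombus.triD, Rhombus.diag,
    cwNext_up_dl, cwNext_down_dl, cwNext_down_dr]

lemma negContrib_dlD_3 (m i : ℕ) :
    negContrib (.dlD m i) 3 = .double ⟨.down m i, .dr m i, .dl m (i+1)⟩
      ⟨.up m (i+1), .dl m (i+1), .hz (m+1) (i+1)⟩ := by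
  simp [negContrib, Rhombus.triU, Rhombus.triD, Rhombus.diag,
    cwNext_down_dl, cwNext_up_dl, cwNext_up_dr]

lemma negContrib_drD_0 (m i : ℕ) :
    negContrib (.drD m i) 0 = .single ⟨.up m i, .hz (m+1) i, .dl m i⟩ := by
  simp [negContrib, Rhombus.triU, Rhombus.triD, Rhombus.diag,
    cwNext_up_dr, cwNext_up_hz]

lemma negContrib_drD_1 (m i : ℕ) :
    negContrib (.drD m i) 1 = .single ⟨.down m i, .hz m i, .dl m (i+1)⟩ := by
  simp [negContrib, Rhombus.triU, Rhombus.triD, Rhombus.diag,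
    cwNext_down_dr, cwNext_down_hz]

lemma negContrib_drD_2 (m i : ℕ) :
    negContrib (.drD m i) 2 = .double ⟨.up m i, .hz (m+1) i, .dr m i⟩
      ⟨.down m i, .dr m i, .dl m (i+1)⟩ := by
  simp [negContrib, Rhombus.triU, Rhombus.triD, Rhombus.diag,
    cwNext_up_dr, cwNext_down_dr, cwNext_down_hz]



/-! ### side membership elimination -/

lemma sideOf_up_elim {e : EdgeK} {m i : ℕ} (h : sideOf e (.up m i)) :
    e = .dr m i ∨ e = .hz (m+1) i ∨ e = .dl m i := by
  simpa [sideOf, Tri.sides] using h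

lemma sideOf_down_elim {e : EdgeK} {m i : ℕ} (h : sideOf e (.down m i)) :
    e = .hz m i ∨ e = .dl m (i+1) ∨ e = .dr m i := by
  simpa [sideOf, Tri.sides] using h

/-! ### membership exclusion helpers -/

lemma delTurn_not_mem {n : ℕ} {lam mu nu : ℕ → ℕ} {f : Flow} {t : Turn} {l : List RVertex}
    (hdel : DelTurn n f t) (hl : IsCompleteTP (ResidAdj n lam mu nu f) l) :
    RVertex.turn t ∉ l := by
  intro ht
  obtain ⟨y, hy⟩ := exists_pred_of_mem hl ht
  cases y with
  | turn t' => exact hy.2.2.1 hdel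
  | src => exact hy.2.1 hdel
  | tgt => exact hy.2.1 hdel

lemma noSucc_not_mem {n : ℕ} {lam mu nu : ℕ → ℕ} {f : Flow} {t : Turn} {l : List RVertex}
    (hns : ∀ y, ¬ ResidAdj n lam mu nu f (RVertex.turn t) y)
    (hl : IsCompleteTP (ResidAdj n lam mu nu f) l) :
    RVertex.turn t ∉ l := by
  intro ht
  obtain ⟨y, hy⟩ := exists_succ_of_mem hl ht
  exact hns y hy

lemma noPred_not_mem {n : ℕ} {lam mu nu : ℕ → ℕ} {f : Flow} {t : Turn} {l : List RVertex}
    (hns : ∀ y, ¬ ResidAdj n lam mu nu f y (RVertex.turn t))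
    (hl : IsCompleteTP (ResidAdj n lam mu nu f) l) :
    RVertex.turn t ∉ l := by
  intro ht
  obtain ⟨y, hy⟩ := exists_pred_of_mem hl ht
  exact hns y hy

/-! ### blocking lemmas at the right border -/

lemma blockR_in {n : ℕ} {lam mu nu : ℕ → ℕ} {f : Flow} {m : ℕ} (hm : m + 2 ≤ n)
    (h1 : slack f (.hzD m m) = 0) (h2 : slack f (.dlD (m+1) m) = 0)
    {l : List RVertex} (hl : IsCompleteTP (ResidAdj n lam mu nu f) l) :
    RVertex.turn ⟨.up (m+1) (m+1), .dr (m+1) (m+1), .hz (m+2) (m+1)⟩ ∉ l ∧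
    RVertex.turn ⟨.up (m+1) (m+1), .dr (m+1) (m+1), .dl (m+1) (m+1)⟩ ∉ l := by
  constructor
  · exact delTurn_not_mem
      ⟨.dlD (m+1) m, ⟨le_refl _, by omega⟩, h2, 0, by rw [negContrib_dlD_0]⟩ hl
  · apply noSucc_not_mem _ hl
    intro y hy
    cases y with
    | src =>
        obtain ⟨hadj, -, -⟩ := hy
        rcases hadj.2 with ⟨m', -, he⟩ | ⟨i', -, he⟩ <;> simp at he
    | tgt =>
        obtain ⟨hadj, -, -⟩ := hy
        obtain ⟨m', -, he⟩ := hadj.2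
        simp at he
    | turn t₂ =>
        obtain ⟨tri2, in2, out2⟩ := t₂
        obtain ⟨hadj, -, hnd2, hnde⟩ := hy
        obtain ⟨-, hval2, hte⟩ := hadj
        obtain ⟨hin, htri, -⟩ := hte
        have hin2 : in2 = EdgeK.dl (m+1) (m+1) := hin.symm
        subst hin2
        have hside : sideOf (EdgeK.dl (m+1) (m+1)) tri2 := hval2.2.1
        rcases sideOf_dl hside with h | ⟨j, hj, h⟩
        · exact htri h.symm
        · obtain rfl : m = j := by omega
          have h' : tri2 = Tri.down (m+1) m := h
          subst h'
          have hsideout : sideOf out2 (Tri.down (m+1) m) := hval2.2.2.1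
          have hne : EdgeK.dl (m+1) (m+1) ≠ out2 := hval2.2.2.2
          rcases sideOf_down_elim hsideout with ho | ho | ho <;> subst ho
          · exact hnde ⟨.dlD (m+1) m, ⟨le_refl _, by omega⟩, h2, 2, by
              rw [negContrib_dlD_2]⟩
          · exact hne rfl
          · exact hnd2 ⟨.hzD m m, ⟨le_refl _, hm⟩, h1, 1, by
              rw [negContrib_hzD_1]⟩

lemma blockR_out {n : ℕ} {lam mu nu : ℕ → ℕ} {f : Flow} {m : ℕ} (hm : m + 2 ≤ n)
    (h1 : slack f (.hzD m m) = 0) (h2 : slack f (.dlD (m+1) m) = 0)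
    {l : List RVertex} (hl : IsCompleteTP (ResidAdj n lam mu nu f) l) :
    RVertex.turn ⟨.up m m, .hz (m+1) m, .dr m m⟩ ∉ l ∧
    RVertex.turn ⟨.up m m, .dl m m, .dr m m⟩ ∉ l := by
  constructor
  · apply noPred_not_mem _ hl
    intro y hy
    cases y with
    | src =>
        obtain ⟨hadj, -, -⟩ := hy
        rcases hadj.2 with ⟨m', -, he⟩ | ⟨i', -, he⟩ <;> simp at he
        omega
    | tgt =>
        obtain ⟨hadj, -, -⟩ := hy
        obtain ⟨m', -, he⟩ := hadj.2
        simp at he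
    | turn t₀ =>
        obtain ⟨tri0, in0, out0⟩ := t₀
        obtain ⟨hadj, hnd0, -, hnde⟩ := hy
        obtain ⟨hval0, -, hte⟩ := hadj
        obtain ⟨hout, htri, -⟩ := hte
        have hout0 : out0 = EdgeK.hz (m+1) m := hout
        subst hout0
        have hside : sideOf (EdgeK.hz (m+1) m) tri0 := hval0.2.2.1
        rcases sideOf_hz hside with ⟨k, hk, h⟩ | h
        · obtain rfl : m = k := by omega
          exact htri h
        · have h' : tri0 = Tri.down (m+1) m := h
          subst h'
          have hsidein : sideOf in0 (Tri.down (m+1) m) := hval0.2.1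
          have hne : in0 ≠ EdgeK.hz (m+1) m := hval0.2.2.2
          rcases sideOf_down_elim hsidein with ho | ho | ho <;> subst ho
          · exact hne rfl
          · exact hnde ⟨.hzD m m, ⟨le_refl _, hm⟩, h1, 3, by
              rw [negContrib_hzD_3]⟩
          · exact hnd0 ⟨.dlD (m+1) m, ⟨le_refl _, by omega⟩, h2, 1, by
              rw [negContrib_dlD_1]⟩
  · exact delTurn_not_mem
      ⟨.hzD m m, ⟨le_refl _, hm⟩, h1, 0, by rw [negContrib_hzD_0]⟩ hl

/-! ### blocking lemmas at the bottom border -/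

lemma blockB_in {N : ℕ} {lam mu nu : ℕ → ℕ} {f : Flow} {i : ℕ} (hiN : i + 1 ≤ N)
    (h1 : slack f (.drD N i) = 0) (h2 : slack f (.dlD N i) = 0)
    {l : List RVertex} (hl : IsCompleteTP (ResidAdj (N+1) lam mu nu f) l) :
    RVertex.turn ⟨.up N i, .hz (N+1) i, .dl N i⟩ ∉ l ∧
    RVertex.turn ⟨.up N i, .hz (N+1) i, .dr N i⟩ ∉ l := by
  constructor
  · exact delTurn_not_mem
      ⟨.drD N i, ⟨hiN, by omega⟩, h1, 0, by rw [negContrib_drD_0]⟩ hl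
  · apply noSucc_not_mem _ hl
    intro y hy
    cases y with
    | src =>
        obtain ⟨hadj, -, -⟩ := hy
        rcases hadj.2 with ⟨m', -, he⟩ | ⟨i', -, he⟩ <;> simp at he
        omega
    | tgt =>
        obtain ⟨hadj, -, -⟩ := hy
        obtain ⟨m', -, he⟩ := hadj.2
        simp at he
    | turn t₂ =>
        obtain ⟨tri2, in2, out2⟩ := t₂
        obtain ⟨hadj, -, hnd2, hnde⟩ := hy
        obtain ⟨-, hval2, hte⟩ := hadj
        obtain ⟨hin, htri, -⟩ := hte
        have hin2 : in2 = EdgeK.dr N i := hin.symm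
        subst hin2
        have hside : sideOf (EdgeK.dr N i) tri2 := hval2.2.1
        rcases sideOf_dr hside with h | h
        · exact htri h.symm
        · have h' : tri2 = Tri.down N i := h
          subst h'
          have hsideout : sideOf out2 (Tri.down N i) := hval2.2.2.1
          have hne : EdgeK.dr N i ≠ out2 := hval2.2.2.2
          rcases sideOf_down_elim hsideout with ho | ho | ho <;> subst ho
          · exact hnd2 ⟨.dlD N i, ⟨hiN, by omega⟩, h2, 1, by
              rw [negContrib_dlD_1]⟩
          · exact hnde ⟨.drD N i, ⟨hiN, by omega⟩, h1, 2, by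
              rw [negContrib_drD_2]⟩
          · exact hne rfl

lemma blockB_out {N : ℕ} {lam mu nu : ℕ → ℕ} {f : Flow} {i : ℕ} (hiN : i + 1 ≤ N)
    (h1 : slack f (.drD N i) = 0) (h2 : slack f (.dlD N i) = 0)
    {l : List RVertex} (hl : IsCompleteTP (ResidAdj (N+1) lam mu nu f) l) :
    RVertex.turn ⟨.up N (i+1), .dl N (i+1), .hz (N+1) (i+1)⟩ ∉ l ∧
    RVertex.turn ⟨.up N (i+1), .dr N (i+1), .hz (N+1) (i+1)⟩ ∉ l := by
  constructor
  · apply noPred_not_mem _ hl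
    intro y hy
    cases y with
    | src =>
        obtain ⟨hadj, -, -⟩ := hy
        rcases hadj.2 with ⟨m', -, he⟩ | ⟨i', -, he⟩ <;> simp at he
    | tgt =>
        obtain ⟨hadj, -, -⟩ := hy
        obtain ⟨m', -, he⟩ := hadj.2
        simp at he
    | turn t₀ =>
        obtain ⟨tri0, in0, out0⟩ := t₀
        obtain ⟨hadj, hnd0, -, hnde⟩ := hy
        obtain ⟨hval0, -, hte⟩ := hadj
        obtain ⟨hout, htri, -⟩ := hte
        have hout0 : out0 = EdgeK.dl N (i+1) := hout
        subst hout0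
        have hside : sideOf (EdgeK.dl N (i+1)) tri0 := hval0.2.2.1
        rcases sideOf_dl hside with h | ⟨j, hj, h⟩
        · exact htri h
        · obtain rfl : i = j := by omega
          have h' : tri0 = Tri.down N i := h
          subst h'
          have hsidein : sideOf in0 (Tri.down N i) := hval0.2.1
          have hne : in0 ≠ EdgeK.dl N (i+1) := hval0.2.2.2
          rcases sideOf_down_elim hsidein with ho | ho | ho <;> subst ho
          · exact hnd0 ⟨.drD N i, ⟨hiN, by omega⟩, h1, 1, by
              rw [negContrib_drD_1]⟩
          · exact hne rfl
          · exact hnde ⟨.dlD N i, ⟨hiN, by omega⟩, h2, 3, by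
              rw [negContrib_dlD_3]⟩
  · exact delTurn_not_mem
      ⟨.dlD N i, ⟨hiN, by omega⟩, h2, 0, by rw [negContrib_dlD_0]⟩ hl

/-! ### only the source is adjacent to border-crossing turns -/

lemma pred_src_right {n : ℕ} {lam mu nu : ℕ → ℕ} {f : Flow} {a : ℕ} {t : Turn}
    (ht : t.inE = .dr a a) (htri : t.tri = .up a a) :
    ∀ y, ResidAdj n lam mu nu f y (RVertex.turn t) → y = RVertex.src := by
  intro y hy
  cases y with
  | src => rfl
  | tgt =>
      obtain ⟨hadj, -, -⟩ := hy
      obtain ⟨m', -, he⟩ := hadj.2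
      rw [ht] at he; simp at he
  | turn t' =>
      exfalso
      obtain ⟨hadj, -, -, -⟩ := hy
      obtain ⟨hval', -, hte⟩ := hadj
      have hs := hval'.2.2.1
      rw [hte.1, ht] at hs
      rcases sideOf_dr hs with h | h
      · exact hte.2.1 (by rw [h, htri])
      · have := hval'.1
        rw [h] at this
        exact absurd this.1 (by omega)

lemma pred_src_bottom {N : ℕ} {lam mu nu : ℕ → ℕ} {f : Flow} {c : ℕ} {t : Turn}
    (ht : t.inE = .hz (N+1) c) (htri : t.tri = .up N c) :
    ∀ y, ResidAdj (N+1) lam mu nu f y (RVertex.turn t) → y = RVertex.src := by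
  intro y hy
  cases y with
  | src => rfl
  | tgt =>
      obtain ⟨hadj, -, -⟩ := hy
      obtain ⟨m', -, he⟩ := hadj.2
      rw [ht] at he; simp at he
  | turn t' =>
      exfalso
      obtain ⟨hadj, -, -, -⟩ := hy
      obtain ⟨hval', -, hte⟩ := hadj
      have hs := hval'.2.2.1
      rw [hte.1, ht] at hs
      rcases sideOf_hz hs with ⟨k, hk, h⟩ | h
      · obtain rfl : k = N := by omega
        exact hte.2.1 (by rw [h, htri])
      · have := hval'.1
        rw [h] at this
        exact absurd this.2 (by omega)

lemma succ_src_right {n : ℕ} {lam mu nu : ℕ → ℕ} {f : Flow} {b : ℕ} {t : Turn}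
    (ht : t.outE = .dr b b) (htri : t.tri = .up b b) :
    ∀ y, ResidAdj n lam mu nu f (RVertex.turn t) y → y = RVertex.src := by
  intro y hy
  cases y with
  | src => rfl
  | tgt =>
      obtain ⟨hadj, -, -⟩ := hy
      obtain ⟨m', -, he⟩ := hadj.2
      rw [ht] at he; simp at he
  | turn t₂ =>
      exfalso
      obtain ⟨hadj, -, -, -⟩ := hy
      obtain ⟨-, hval2, hte⟩ := hadj
      have hs := hval2.2.1
      rw [← hte.1, ht] at hs
      rcases sideOf_dr hs with h | h
      · exact hte.2.1 (by rw [h, htri])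
      · have := hval2.1
        rw [h] at this
        exact absurd this.1 (by omega)

lemma succ_src_bottom {N : ℕ} {lam mu nu : ℕ → ℕ} {f : Flow} {c : ℕ} {t : Turn}
    (ht : t.outE = .hz (N+1) c) (htri : t.tri = .up N c) :
    ∀ y, ResidAdj (N+1) lam mu nu f (RVertex.turn t) y → y = RVertex.src := by
  intro y hy
  cases y with
  | src => rfl
  | tgt =>
      obtain ⟨hadj, -, -⟩ := hy
      obtain ⟨m', -, he⟩ := hadj.2
      rw [ht] at he; simp at he
  | turn t₂ =>
      exfalso
      obtain ⟨hadj, -, -, -⟩ := hy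
      obtain ⟨-, hval2, hte⟩ := hadj
      have hs := hval2.2.1
      rw [← hte.1, ht] at hs
      rcases sideOf_hz hs with ⟨k, hk, h⟩ | h
      · obtain rfl : k = N := by omega
        exact hte.2.1 (by rw [h, htri])
      · have := hval2.1
        rw [h] at this
        exact absurd this.2 (by omega)


/-! ### The four turn patterns of `pathDelta`, and pattern weights -/

def tA (e : EdgeK) : Turn := ⟨upOf e, e, cwNext (upOf e) e⟩
def tB (e : EdgeK) : Turn := ⟨upOf e, e, cwNext (upOf e) (cwNext (upOf e) e)⟩
def tC (e : EdgeK) : Turn := ⟨upOf e, cwNext (upOf e) e, e⟩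
def tD (e : EdgeK) : Turn := ⟨upOf e, cwNext (upOf e) (cwNext (upOf e) e), e⟩

noncomputable def WW (φ : List RVertex → ℝ) (t : Turn) : ℝ :=
  ∑ᶠ l ∈ {l : List RVertex | RVertex.turn t ∈ l}, φ l

lemma tA_dr (m : ℕ) : tA (.dr m m) = ⟨.up m m, .dr m m, .hz (m+1) m⟩ := by
  simp [tA, upOf, cwNext_up_dr]

lemma tB_dr (m : ℕ) : tB (.dr m m) = ⟨.up m m, .dr m m, .dl m m⟩ := by
  simp [tB, upOf, cwNext_up_dr, cwNext_up_hz]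

lemma tC_dr (m : ℕ) : tC (.dr m m) = ⟨.up m m, .hz (m+1) m, .dr m m⟩ := by
  simp [tC, upOf, cwNext_up_dr]

lemma tD_dr (m : ℕ) : tD (.dr m m) = ⟨.up m m, .dl m m, .dr m m⟩ := by
  simp [tD, upOf, cwNext_up_dr, cwNext_up_hz]

lemma upOf_hz_succ (N i : ℕ) : upOf (.hz (N+1) i) = .up N i := by
  simp [upOf]

lemma tA_hz (N i : ℕ) : tA (.hz (N+1) i) = ⟨.up N i, .hz (N+1) i, .dl N i⟩ := by
  simp [tA, upOf_hz_succ, cwNext_up_hz]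

lemma tB_hz (N i : ℕ) : tB (.hz (N+1) i) = ⟨.up N i, .hz (N+1) i, .dr N i⟩ := by
  simp [tB, upOf_hz_succ, cwNext_up_hz, cwNext_up_dl]

lemma tC_hz (N i : ℕ) : tC (.hz (N+1) i) = ⟨.up N i, .dl N i, .hz (N+1) i⟩ := by
  simp [tC, upOf_hz_succ, cwNext_up_hz]

lemma tD_hz (N i : ℕ) : tD (.hz (N+1) i) = ⟨.up N i, .dr N i, .hz (N+1) i⟩ := by
  simp [tD, upOf_hz_succ, cwNext_up_hz, cwNext_up_dl]

lemma wDelta_eq {φ : List RVertex → ℝ} (hfin : (Function.support φ).Finite) (e : EdgeK) :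
    wDelta φ e = WW φ (tA e) + WW φ (tB e) - WW φ (tC e) - WW φ (tD e) := by
  have hsub : ∀ (h : List RVertex → ℝ), (∀ l, φ l = 0 → h l = 0) →
      (Function.support h).Finite := by
    intro h hh
    apply hfin.subset
    intro l hl
    rw [Function.mem_support] at hl ⊢
    exact fun h0 => hl (hh l h0)
  have hindfin : ∀ S : Set (List RVertex), (Function.support (S.indicator φ)).Finite := by
    intro S
    exact hsub _ (fun l h0 => by simp [Set.indicator_apply, h0])
  have step : ∀ l : List RVertex, φ l * pathDelta l e =
      ({l : List RVertex | RVertex.turn (tA e) ∈ l}.indicator φ l +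
        {l : List RVertex | RVertex.turn (tB e) ∈ l}.indicator φ l -
        {l : List RVertex | RVertex.turn (tC e) ∈ l}.indicator φ l) -
      {l : List RVertex | RVertex.turn (tD e) ∈ l}.indicator φ l := by
    intro l
    simp only [pathDelta, Set.indicator_apply, Set.mem_setOf_eq, tA, tB, tC, tD]
    by_cases hA : RVertex.turn ⟨upOf e, e, cwNext (upOf e) e⟩ ∈ l <;>
      by_cases hB : RVertex.turn ⟨upOf e, e, cwNext (upOf e) (cwNext (upOf e) e)⟩ ∈ l <;>
      by_cases hC : RVertex.turn ⟨upOf e, cwNext (upOf e) e, e⟩ ∈ l <;>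
      by_cases hD : RVertex.turn ⟨upOf e, cwNext (upOf e) (cwNext (upOf e) e), e⟩ ∈ l <;>
      simp [hA, hB, hC, hD] <;> ring
  rw [wDelta, finsum_congr step]
  rw [finsum_sub_distrib (hsub _ (by intro l h0; simp [Set.indicator_apply, h0]))
    (hindfin _)]
  rw [finsum_sub_distrib (hsub _ (by intro l h0; simp [Set.indicator_apply, h0]))
    (hindfin _)]
  rw [finsum_add_distrib (hindfin _) (hindfin _)]
  rw [WW, WW, WW, WW, finsum_mem_def, finsum_mem_def, finsum_mem_def, finsum_mem_def]

lemma WW_eq_zero {A : RVertex → RVertex → Prop} {φ : List RVertex → ℝ}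
    (hw : ∀ l, ¬ IsCompleteTP A l → φ l = 0) {t : Turn}
    (h : ∀ l : List RVertex, IsCompleteTP A l → RVertex.turn t ∉ l) : WW φ t = 0 := by
  rw [WW, finsum_mem_inter_support_eq φ _ ∅, finsum_mem_empty]
  ext l
  simp only [Set.mem_inter_iff, Set.mem_setOf_eq, Function.mem_support,
    Set.mem_empty_iff_false, false_and, iff_false, not_and]
  intro hmem hne
  have hC : IsCompleteTP A l := by
    by_contra hc
    exact hne (hw l hc)
  exact h l hC hmem

lemma finsum_mem_pair_split {φ : List RVertex → ℝ} (hfin : (Function.support φ).Finite)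
    {S SA SB : Set (List RVertex)}
    (hiff : ∀ l, φ l ≠ 0 → (l ∈ S ↔ (l ∈ SA ∨ l ∈ SB)))
    (hdisj : ∀ l, φ l ≠ 0 → l ∈ SA → l ∈ SB → False) :
    ∑ᶠ l ∈ S, φ l = (∑ᶠ l ∈ SA, φ l) + ∑ᶠ l ∈ SB, φ l := by
  have h1 : ∑ᶠ l ∈ S, φ l =
      ∑ᶠ l ∈ (SA ∩ Function.support φ) ∪ (SB ∩ Function.support φ), φ l := by
    apply finsum_mem_inter_support_eq
    ext l
    simp only [Set.mem_inter_iff, Set.mem_union, Function.mem_support]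
    constructor
    · rintro ⟨hS, hne⟩
      rcases (hiff l hne).1 hS with h | h
      · exact ⟨Or.inl ⟨h, hne⟩, hne⟩
      · exact ⟨Or.inr ⟨h, hne⟩, hne⟩
    · rintro ⟨h, hne⟩
      refine ⟨(hiff l hne).2 ?_, hne⟩
      rcases h with ⟨h, -⟩ | ⟨h, -⟩
      exacts [Or.inl h, Or.inr h]
  rw [h1, finsum_mem_union ?_ (hfin.subset Set.inter_subset_right)
    (hfin.subset Set.inter_subset_right)]
  · congr 1
    · apply finsum_mem_inter_support_eq
      rw [Set.inter_assoc, Set.inter_self]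
    · apply finsum_mem_inter_support_eq
      rw [Set.inter_assoc, Set.inter_self]
  · rw [Set.disjoint_left]
    rintro l ⟨hA, hne⟩ ⟨hB, -⟩
    exact hdisj l hne hA hB

/-! ### run lists -/

def runL (g : ℕ → EdgeK) (a cnt : ℕ) : List EdgeK :=
  (List.range cnt).map (fun j => g (a + j))

lemma runL_mem {g : ℕ → EdgeK} {a cnt : ℕ} {x : EdgeK} :
    x ∈ runL g a cnt ↔ ∃ j, j < cnt ∧ x = g (a + j) := by
  simp [runL, eq_comm]

lemma runL_head? {g : ℕ → EdgeK} {a cnt : ℕ} (h : 0 < cnt) :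
    (runL g a cnt).head? = some (g a) := by
  obtain ⟨k, rfl⟩ : ∃ k, cnt = k + 1 := ⟨cnt - 1, by omega⟩
  rw [runL, List.range_succ_eq_map]
  simp

lemma runL_getLast? {g : ℕ → EdgeK} {a cnt : ℕ} (h : 0 < cnt) :
    (runL g a cnt).getLast? = some (g (a + (cnt - 1))) := by
  obtain ⟨k, rfl⟩ : ∃ k, cnt = k + 1 := ⟨cnt - 1, by omega⟩
  rw [runL, List.range_succ, List.map_append]
  simp

lemma runL_chain' {g : ℕ → EdgeK} {a cnt : ℕ} (h : ∀ j, j + 1 < cnt → g (a + j + 1) = lineSucc (g (a + j))) :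
    (runL g a cnt).Chain' (fun x y => y = lineSucc x) := by
  rw [runL, List.Chain', List.isChain_map]
  cases cnt with
  | zero => simp
  | succ k =>
      rw [List.isChain_range_succ]
      intro m hm
      have := h m (by omega)
      rw [show a + (m+1) = a + m + 1 by omega]
      exact this

lemma runL_sum {M : Type*} [AddCommMonoid M] (g : ℕ → EdgeK) (a cnt : ℕ) (F : EdgeK → M) :
    ((runL g a cnt).map F).sum = ∑ j ∈ Finset.range cnt, F (g (a + j)) := by
  induction cnt with
  | zero => simp [runL]
  | succ k ih =>
      rw [runL, List.range_succ, List.map_append, List.map_append, List.sum_append,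
        Finset.sum_range_succ, ← runL, ih]
      simp


/-! ### small helpers for flatspaces -/

lemma flatAdj_symm {n : ℕ} {f : Flow} : Symmetric (FlatAdjTri n f) := by
  rintro T T' ⟨ρ, h1, h2, h3 | h3⟩
  · exact ⟨ρ, h1, h2, Or.inr ⟨h3.2, h3.1⟩⟩
  · exact ⟨ρ, h1, h2, Or.inl ⟨h3.2, h3.1⟩⟩

lemma rtg_symm {n : ℕ} {f : Flow} {T T' : Tri}
    (h : Relation.ReflTransGen (FlatAdjTri n f) T T') :
    Relation.ReflTransGen (FlatAdjTri n f) T' T :=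
  by haveI : Std.Symm (FlatAdjTri n f) := ⟨fun _ _ h => flatAdj_symm h⟩; exact Std.Symm.symm _ _ h

lemma resid_valid {n : ℕ} {lam mu nu : ℕ → ℕ} {f : Flow} {y : RVertex} {t : Turn}
    (h : ResidAdj n lam mu nu f y (RVertex.turn t)) : Turn.valid n t := by
  cases y with
  | turn t' => exact h.1.2.1
  | src => exact h.1.1
  | tgt => exact h.1.1

lemma mem_turn_valid {n : ℕ} {lam mu nu : ℕ → ℕ} {f : Flow} {l : List RVertex}
    (hl : IsCompleteTP (ResidAdj n lam mu nu f) l) {t : Turn}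
    (ht : RVertex.turn t ∈ l) : Turn.valid n t := by
  obtain ⟨y, hy⟩ := exists_pred_of_mem hl ht
  exact resid_valid hy

/-! ### the right-border run lemma -/

lemma run_right {N : ℕ} {lam mu nu : ℕ → ℕ} {f d : Flow} {φ : List RVertex → ℝ}
    (hIsF : IsFlow (N+1) f)
    (hφ : WeightedFamily (ResidAdj (N+1) lam mu nu f) φ)
    (hfin : (Function.support φ).Finite)
    (hcompat : ∀ (L : Set Tri) (s : List EdgeK), IsFlatspace (N+1) f L → IsSide (N+1) L s →
      inWeight (N+1) L s φ = inSide (N+1) L d s ∧ outWeight (N+1) L s φ = outSide (N+1) L d s)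
    {a b : ℕ} (hab : a ≤ b) (hbN : b ≤ N)
    (hrun : ∀ k, a ≤ k → k < b →
      Relation.ReflTransGen (FlatAdjTri (N+1) f) (.up k k) (.up (k+1) (k+1)))
    (hpre : ∀ a', a = a' + 1 →
      Tri.up a' a' ∉ {T' | Relation.ReflTransGen (FlatAdjTri (N+1) f) (Tri.up a a) T'})
    (hpost : b = N ∨
      Tri.up (b+1) (b+1) ∉ {T' | Relation.ReflTransGen (FlatAdjTri (N+1) f) (Tri.up a a) T'}) :
    ∑ m ∈ Finset.Icc a b, wDelta φ (.dr m m) = ∑ m ∈ Finset.Icc a b, d.dr m m := by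
  classical
  set L : Set Tri := {T' | Relation.ReflTransGen (FlatAdjTri (N+1) f) (Tri.up a a) T'} with hL
  have hTP : ∀ l : List RVertex, φ l ≠ 0 → IsCompleteTP (ResidAdj (N+1) lam mu nu f) l := by
    intro l hne
    by_contra hc
    exact hne (hφ.2 l hc)
  have hmem : ∀ k, a ≤ k → k ≤ b → Tri.up k k ∈ L := by
    have haux : ∀ j, a + j ≤ b → Tri.up (a+j) (a+j) ∈ L := by
      intro j
      induction j with
      | zero => intro _; exact Relation.ReflTransGen.refl
      | succ j ih =>
          intro hj
          have h1 := ih (by omega)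
          have h2 := hrun (a+j) (by omega) (by omega)
          have : Relation.ReflTransGen (FlatAdjTri (N+1) f) (Tri.up a a)
              (Tri.up (a+j+1) (a+j+1)) := Relation.ReflTransGen.trans h1 h2
          rw [show a + (j+1) = a + j + 1 by omega]
          exact this
    intro k hk1 hk2
    have := haux (k - a) (by omega)
    rwa [show a + (k-a) = k by omega] at this
  have hflat : ∀ k, a ≤ k → k < b →
      slack f (.hzD k k) = 0 ∧ slack f (.dlD (k+1) k) = 0 :=
    fun k h1 h2 => L1R hIsF (by omega) (hrun k h1 h2)
  set cnt := b + 1 - a with hcnt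
  have hcnt0 : 0 < cnt := by omega
  set s : List EdgeK := runL (fun k => .dr k k) a cnt with hs
  have hnodn : ∀ k : ℕ, ¬ dnIn (N+1) L (.dr k k) := by
    rintro k ⟨T, hT, hvT, -⟩
    have : T = Tri.down k k := by
      simp only [dnOf?, Option.some.injEq] at hT
      exact hT.symm
    rw [this] at hvT
    exact absurd hvT.1 (by omega)
  have hBE : ∀ k, a ≤ k → k ≤ b → BorderEdge (N+1) L (.dr k k) := by
    intro k h1 h2
    exact ⟨⟨le_refl k, by omega⟩,
      Or.inl ⟨⟨⟨le_refl k, by omega⟩, hmem k h1 h2⟩, hnodn k⟩⟩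
  have hhead : s.head? = some (EdgeK.dr a a) := runL_head? hcnt0
  have hlast : s.getLast? = some (EdgeK.dr b b) := by
    rw [runL_getLast? hcnt0, show a + (cnt - 1) = b by omega]
  have hside : IsSide (N+1) L s := by
    refine ⟨?_, ?_, ?_, ?_, ?_⟩
    · intro h0
      rw [h0] at hhead
      simp at hhead
    · intro e he
      rw [hs, runL_mem] at he
      obtain ⟨j, hj, rfl⟩ := he
      exact hBE (a+j) (by omega) (by omega)
    · exact runL_chain' (fun j hj => rfl)
    · intro e a' hh hls
      rw [hhead] at hh
      obtain rfl : a' = EdgeK.dr a a := by injection hh with h; exact h.symm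
      cases e with
      | dl m i => simp [lineSucc] at hls
      | hz m i => simp [lineSucc] at hls
      | dr m i =>
          simp only [lineSucc, EdgeK.dr.injEq] at hls
          obtain ⟨rfl, rfl⟩ : m = a - 1 ∧ i = a - 1 := by omega
          intro hbe
          rcases hbe.2 with ⟨⟨-, hmem'⟩, -⟩ | ⟨hdn, -⟩
          · exact hpre (a-1) (by omega) hmem'
          · exact hnodn _ hdn
    · intro a' hl'
      rw [hlast] at hl'
      obtain rfl : a' = EdgeK.dr b b := by injection hl' with h; exact h.symm
      intro hbe
      rcases hpost with rfl | hnb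
      · exact absurd hbe.1.2 (by omega)
      · rcases hbe.2 with ⟨⟨-, hmem'⟩, -⟩ | ⟨hdn, -⟩
        · exact hnb hmem'
        · exact hnodn _ hdn
  have hCW : sideCW (N+1) L s :=
    ⟨.dr a a, hhead, ⟨⟨le_refl a, by omega⟩, hmem a le_rfl hab⟩⟩
  have hEnt : ∀ e, entranceOf (N+1) L s e → e = .dr a a := by
    rintro e (⟨-, hh⟩ | ⟨hncw, -⟩)
    · rw [hhead] at hh
      injection hh with h
      exact h.symm
    · exact absurd hCW hncw
  have hExi : ∀ e, exitOf (N+1) L s e → e = .dr b b := by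
    rintro e (⟨-, hh⟩ | ⟨hncw, -⟩)
    · rw [hlast] at hh
      injection hh with h
      exact h.symm
    · exact absurd hCW hncw
  have hIW : inWeight (N+1) L s φ = WW φ (tA (.dr a a)) + WW φ (tB (.dr a a)) := by
    rw [inWeight, WW, WW]
    apply finsum_mem_pair_split hfin
    · intro l hne
      have hl := hTP l hne
      constructor
      · rintro ⟨e, hent, t, htl, hinE, hLt⟩
        obtain rfl := hEnt e hent
        have hv := mem_turn_valid hl htl
        obtain ⟨tri, inE, outE⟩ := t
        have hinE' : inE = EdgeK.dr a a := hinE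
        subst hinE'
        have hs' : sideOf (EdgeK.dr a a) tri := hv.2.1
        rcases sideOf_dr hs' with h | h
        · subst h
          have ho := hv.2.2.1
          rcases sideOf_up_elim ho with h | h | h
          · exact absurd h.symm hv.2.2.2
          · subst h
            left
            rw [Set.mem_setOf_eq, tA_dr]
            exact htl
          · subst h
            right
            rw [Set.mem_setOf_eq, tB_dr]
            exact htl
        · rw [h] at hLt
          exact absurd hLt.1.1 (by omega)
      · rintro (hmem' | hmem')
        · rw [Set.mem_setOf_eq, tA_dr] at hmem'
          exact ⟨.dr a a, Or.inl ⟨hCW, hhead⟩, _, hmem', rfl,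
            ⟨⟨le_refl a, by omega⟩, hmem a le_rfl hab⟩⟩
        · rw [Set.mem_setOf_eq, tB_dr] at hmem'
          exact ⟨.dr a a, Or.inl ⟨hCW, hhead⟩, _, hmem', rfl,
            ⟨⟨le_refl a, by omega⟩, hmem a le_rfl hab⟩⟩
    · intro l hne h1 h2
      have hl := hTP l hne
      have := pred_src_unique hl h1 h2
        (pred_src_right rfl rfl) (pred_src_right rfl rfl)
      rw [tA_dr, tB_dr] at this
      simp at this
  have hOW : outWeight (N+1) L s φ = WW φ (tC (.dr b b)) + WW φ (tD (.dr b b)) := by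
    rw [outWeight, WW, WW]
    apply finsum_mem_pair_split hfin
    · intro l hne
      have hl := hTP l hne
      constructor
      · rintro ⟨e, hexi, t, htl, houtE, hLt⟩
        obtain rfl := hExi e hexi
        have hv := mem_turn_valid hl htl
        obtain ⟨tri, inE, outE⟩ := t
        have houtE' : outE = EdgeK.dr b b := houtE
        subst houtE'
        have hs' : sideOf (EdgeK.dr b b) tri := hv.2.2.1
        rcases sideOf_dr hs' with h | h
        · subst h
          have ho := hv.2.1
          rcases sideOf_up_elim ho with h | h | h
          · exact absurd h hv.2.2.2
          · subst h
            left
            rw [Set.mem_setOf_eq, tC_dr]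
            exact htl
          · subst h
            right
            rw [Set.mem_setOf_eq, tD_dr]
            exact htl
        · rw [h] at hLt
          exact absurd hLt.1.1 (by omega)
      · rintro (hmem' | hmem')
        · rw [Set.mem_setOf_eq, tC_dr] at hmem'
          exact ⟨.dr b b, Or.inl ⟨hCW, hlast⟩, _, hmem', rfl,
            ⟨⟨le_refl b, by omega⟩, hmem b hab le_rfl⟩⟩
        · rw [Set.mem_setOf_eq, tD_dr] at hmem'
          exact ⟨.dr b b, Or.inl ⟨hCW, hlast⟩, _, hmem', rfl,
            ⟨⟨le_refl b, by omega⟩, hmem b hab le_rfl⟩⟩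
    · intro l hne h1 h2
      have hl := hTP l hne
      have := succ_src_unique hl h1 h2
        (succ_src_right rfl rfl) (succ_src_right rfl rfl)
      rw [tC_dr, tD_dr] at this
      simp at this
  have hIS : inSide (N+1) L d s = ∑ m ∈ Finset.Icc a b, max (d.dr m m) 0 := by
    rw [inSide, hs, runL_sum, ← Finset.Ico_add_one_right_eq_Icc, Finset.sum_Ico_eq_sum_range]
    rw [show b + 1 - a = cnt from rfl]
    apply Finset.sum_congr rfl
    intro j hj
    rw [Finset.mem_range] at hj
    rw [inPosEdge, inflowEdge, if_pos ⟨⟨le_refl _, by omega⟩, hmem (a+j) (by omega) (by omega)⟩]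
    rfl
  have hOS : outSide (N+1) L d s = ∑ m ∈ Finset.Icc a b, max (-(d.dr m m)) 0 := by
    rw [outSide, hs, runL_sum, ← Finset.Ico_add_one_right_eq_Icc, Finset.sum_Ico_eq_sum_range]
    rw [show b + 1 - a = cnt from rfl]
    apply Finset.sum_congr rfl
    intro j hj
    rw [Finset.mem_range] at hj
    rw [outPosEdge, inflowEdge, if_pos ⟨⟨le_refl _, by omega⟩, hmem (a+j) (by omega) (by omega)⟩]
    rfl
  obtain ⟨hinEq, houtEq⟩ := hcompat L s ⟨.up a a, ⟨le_rfl, by omega⟩, hL⟩ hside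
  have hsum1 : ∑ m ∈ Finset.Icc a b, wDelta φ (.dr m m) =
      (∑ m ∈ Finset.Icc a b, (WW φ (tA (.dr m m)) + WW φ (tB (.dr m m)))) -
      ∑ m ∈ Finset.Icc a b, (WW φ (tC (.dr m m)) + WW φ (tD (.dr m m))) := by
    rw [← Finset.sum_sub_distrib]
    apply Finset.sum_congr rfl
    intro m hm
    rw [wDelta_eq hfin]
    ring
  have hA0 : ∀ m ∈ Finset.Icc a b, m ≠ a → WW φ (tA (.dr m m)) + WW φ (tB (.dr m m)) = 0 := by
    intro m hm hma
    rw [Finset.mem_Icc] at hm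
    obtain ⟨m', rfl⟩ : ∃ m', m = m' + 1 := ⟨m - 1, by omega⟩
    have hfl := hflat m' (by omega) (by omega)
    rw [WW_eq_zero hφ.2 (fun l hl => by rw [tA_dr]; exact (blockR_in (by omega) hfl.1 hfl.2 hl).1),
      WW_eq_zero hφ.2 (fun l hl => by rw [tB_dr]; exact (blockR_in (by omega) hfl.1 hfl.2 hl).2)]
    ring
  have hC0 : ∀ m ∈ Finset.Icc a b, m ≠ b → WW φ (tC (.dr m m)) + WW φ (tD (.dr m m)) = 0 := by
    intro m hm hmb
    rw [Finset.mem_Icc] at hm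
    have hfl := hflat m (by omega) (by omega)
    rw [WW_eq_zero hφ.2 (fun l hl => by rw [tC_dr]; exact (blockR_out (by omega) hfl.1 hfl.2 hl).1),
      WW_eq_zero hφ.2 (fun l hl => by rw [tD_dr]; exact (blockR_out (by omega) hfl.1 hfl.2 hl).2)]
    ring
  rw [hsum1, Finset.sum_eq_single_of_mem a (Finset.mem_Icc.2 ⟨le_rfl, hab⟩) hA0,
    Finset.sum_eq_single_of_mem b (Finset.mem_Icc.2 ⟨hab, le_rfl⟩) hC0,
    ← hIW, ← hOW, hinEq, houtEq, hIS, hOS, ← Finset.sum_sub_distrib]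
  apply Finset.sum_congr rfl
  intro m hm
  exact max_zero_sub_max_neg_zero_eq_self _

/-! ### the bottom-border run lemma -/

lemma run_bottom {N : ℕ} {lam mu nu : ℕ → ℕ} {f d : Flow} {φ : List RVertex → ℝ}
    (hIsF : IsFlow (N+1) f)
    (hφ : WeightedFamily (ResidAdj (N+1) lam mu nu f) φ)
    (hfin : (Function.support φ).Finite)
    (hcompat : ∀ (L : Set Tri) (s : List EdgeK), IsFlatspace (N+1) f L → IsSide (N+1) L s →
      inWeight (N+1) L s φ = inSide (N+1) L d s ∧ outWeight (N+1) L s φ = outSide (N+1) L d s)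
    {a b : ℕ} (hab : a ≤ b) (hbN : b ≤ N)
    (hrun : ∀ k, a ≤ k → k < b →
      Relation.ReflTransGen (FlatAdjTri (N+1) f) (.up N k) (.up N (k+1)))
    (hpre : ∀ a', a = a' + 1 →
      Tri.up N a' ∉ {T' | Relation.ReflTransGen (FlatAdjTri (N+1) f) (Tri.up N a) T'})
    (hpost : b = N ∨
      Tri.up N (b+1) ∉ {T' | Relation.ReflTransGen (FlatAdjTri (N+1) f) (Tri.up N a) T'}) :
    ∑ m ∈ Finset.Icc a b, wDelta φ (.hz (N+1) m) = ∑ m ∈ Finset.Icc a b, d.hz (N+1) m := by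
  classical
  set L : Set Tri := {T' | Relation.ReflTransGen (FlatAdjTri (N+1) f) (Tri.up N a) T'} with hL
  have hTP : ∀ l : List RVertex, φ l ≠ 0 → IsCompleteTP (ResidAdj (N+1) lam mu nu f) l := by
    intro l hne
    by_contra hc
    exact hne (hφ.2 l hc)
  have hmem : ∀ k, a ≤ k → k ≤ b → Tri.up N k ∈ L := by
    have haux : ∀ j, a + j ≤ b → Tri.up N (a+j) ∈ L := by
      intro j
      induction j with
      | zero => intro _; exact Relation.ReflTransGen.refl
      | succ j ih =>
          intro hj
          have h1 := ih (by omega)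
          have h2 := hrun (a+j) (by omega) (by omega)
          have : Relation.ReflTransGen (FlatAdjTri (N+1) f) (Tri.up N a)
              (Tri.up N (a+j+1)) := Relation.ReflTransGen.trans h1 h2
          rw [show a + (j+1) = a + j + 1 by omega]
          exact this
    intro k hk1 hk2
    have := haux (k - a) (by omega)
    rwa [show a + (k-a) = k by omega] at this
  have hflat : ∀ k, a ≤ k → k < b →
      slack f (.drD N k) = 0 ∧ slack f (.dlD N k) = 0 :=
    fun k h1 h2 => L1B hIsF (hrun k h1 h2)
  set cnt := b + 1 - a with hcnt
  have hcnt0 : 0 < cnt := by omega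
  set s : List EdgeK := runL (fun k => .hz (N+1) k) a cnt with hs
  have hnodn : ∀ k : ℕ, ¬ dnIn (N+1) L (.hz (N+1) k) := by
    rintro k ⟨T, hT, hvT, -⟩
    have : T = Tri.down (N+1) k := by
      simp only [dnOf?, Option.some.injEq] at hT
      exact hT.symm
    rw [this] at hvT
    exact absurd hvT.2 (by omega)
  have hBE : ∀ k, a ≤ k → k ≤ b → BorderEdge (N+1) L (.hz (N+1) k) := by
    intro k h1 h2
    exact ⟨⟨by omega, le_refl _⟩,
      Or.inl ⟨⟨⟨by omega, by omega⟩, hmem k h1 h2⟩, hnodn k⟩⟩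
  have hhead : s.head? = some (EdgeK.hz (N+1) a) := runL_head? hcnt0
  have hlast : s.getLast? = some (EdgeK.hz (N+1) b) := by
    rw [runL_getLast? hcnt0, show a + (cnt - 1) = b by omega]
  have hside : IsSide (N+1) L s := by
    refine ⟨?_, ?_, ?_, ?_, ?_⟩
    · intro h0
      rw [h0] at hhead
      simp at hhead
    · intro e he
      rw [hs, runL_mem] at he
      obtain ⟨j, hj, rfl⟩ := he
      exact hBE (a+j) (by omega) (by omega)
    · exact runL_chain' (fun j hj => rfl)
    · intro e a' hh hls
      rw [hhead] at hh
      obtain rfl : a' = EdgeK.hz (N+1) a := by injection hh with h; exact h.symm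
      cases e with
      | dl m i => simp [lineSucc] at hls
      | dr m i => simp [lineSucc] at hls
      | hz m i =>
          simp only [lineSucc, EdgeK.hz.injEq] at hls
          obtain ⟨rfl, hia⟩ := hls
          intro hbe
          rcases hbe.2 with ⟨⟨-, hmem'⟩, -⟩ | ⟨hdn, -⟩
          · exact hpre i (by omega) hmem'
          · exact hnodn _ hdn
    · intro a' hl'
      rw [hlast] at hl'
      obtain rfl : a' = EdgeK.hz (N+1) b := by injection hl' with h; exact h.symm
      intro hbe
      rcases hpost with rfl | hnb
      · exact absurd hbe.1.1 (by omega)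
      · rcases hbe.2 with ⟨⟨-, hmem'⟩, -⟩ | ⟨hdn, -⟩
        · exact hnb hmem'
        · exact hnodn _ hdn
  have hNCW : ¬ sideCW (N+1) L s := by
    rintro ⟨e, he, hmt⟩
    rw [hhead] at he
    obtain rfl : e = EdgeK.hz (N+1) a := by injection he with h; exact h.symm
    exact hnodn a hmt
  have hEnt : ∀ e, entranceOf (N+1) L s e → e = .hz (N+1) b := by
    rintro e (⟨hcw, -⟩ | ⟨-, hh⟩)
    · exact absurd hcw hNCW
    · rw [hlast] at hh
      injection hh with h
      exact h.symm
  have hExi : ∀ e, exitOf (N+1) L s e → e = .hz (N+1) a := by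
    rintro e (⟨hcw, -⟩ | ⟨-, hh⟩)
    · exact absurd hcw hNCW
    · rw [hhead] at hh
      injection hh with h
      exact h.symm
  have hIW : inWeight (N+1) L s φ = WW φ (tA (.hz (N+1) b)) + WW φ (tB (.hz (N+1) b)) := by
    rw [inWeight, WW, WW]
    apply finsum_mem_pair_split hfin
    · intro l hne
      have hl := hTP l hne
      constructor
      · rintro ⟨e, hent, t, htl, hinE, hLt⟩
        obtain rfl := hEnt e hent
        have hv := mem_turn_valid hl htl
        obtain ⟨tri, inE, outE⟩ := t
        have hinE' : inE = EdgeK.hz (N+1) b := hinE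
        subst hinE'
        have hs' : sideOf (EdgeK.hz (N+1) b) tri := hv.2.1
        rcases sideOf_hz hs' with ⟨k, hk, h⟩ | h
        · obtain rfl : k = N := by omega
          subst h
          have ho := hv.2.2.1
          rcases sideOf_up_elim ho with h | h | h
          · subst h
            right
            rw [Set.mem_setOf_eq, tB_hz]
            exact htl
          · exact absurd h.symm hv.2.2.2
          · subst h
            left
            rw [Set.mem_setOf_eq, tA_hz]
            exact htl
        · rw [h] at hLt
          exact absurd hLt.1.2 (by omega)
      · rintro (hmem' | hmem')
        · rw [Set.mem_setOf_eq, tA_hz] at hmem'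
          exact ⟨.hz (N+1) b, Or.inr ⟨hNCW, hlast⟩, _, hmem', rfl,
            ⟨⟨by omega, by omega⟩, hmem b hab le_rfl⟩⟩
        · rw [Set.mem_setOf_eq, tB_hz] at hmem'
          exact ⟨.hz (N+1) b, Or.inr ⟨hNCW, hlast⟩, _, hmem', rfl,
            ⟨⟨by omega, by omega⟩, hmem b hab le_rfl⟩⟩
    · intro l hne h1 h2
      have hl := hTP l hne
      have := pred_src_unique hl h1 h2
        (pred_src_bottom rfl rfl) (pred_src_bottom rfl rfl)
      rw [tA_hz, tB_hz] at this
      simp at this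
  have hOW : outWeight (N+1) L s φ = WW φ (tC (.hz (N+1) a)) + WW φ (tD (.hz (N+1) a)) := by
    rw [outWeight, WW, WW]
    apply finsum_mem_pair_split hfin
    · intro l hne
      have hl := hTP l hne
      constructor
      · rintro ⟨e, hexi, t, htl, houtE, hLt⟩
        obtain rfl := hExi e hexi
        have hv := mem_turn_valid hl htl
        obtain ⟨tri, inE, outE⟩ := t
        have houtE' : outE = EdgeK.hz (N+1) a := houtE
        subst houtE'
        have hs' : sideOf (EdgeK.hz (N+1) a) tri := hv.2.2.1
        rcases sideOf_hz hs' with ⟨k, hk, h⟩ | h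
        · obtain rfl : k = N := by omega
          subst h
          have ho := hv.2.1
          rcases sideOf_up_elim ho with h | h | h
          · subst h
            right
            rw [Set.mem_setOf_eq, tD_hz]
            exact htl
          · exact absurd h hv.2.2.2
          · subst h
            left
            rw [Set.mem_setOf_eq, tC_hz]
            exact htl
        · rw [h] at hLt
          exact absurd hLt.1.2 (by omega)
      · rintro (hmem' | hmem')
        · rw [Set.mem_setOf_eq, tC_hz] at hmem'
          exact ⟨.hz (N+1) a, Or.inr ⟨hNCW, hhead⟩, _, hmem', rfl,
            ⟨⟨by omega, by omega⟩, hmem a le_rfl hab⟩⟩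
        · rw [Set.mem_setOf_eq, tD_hz] at hmem'
          exact ⟨.hz (N+1) a, Or.inr ⟨hNCW, hhead⟩, _, hmem', rfl,
            ⟨⟨by omega, by omega⟩, hmem a le_rfl hab⟩⟩
    · intro l hne h1 h2
      have hl := hTP l hne
      have := succ_src_unique hl h1 h2
        (succ_src_bottom rfl rfl) (succ_src_bottom rfl rfl)
      rw [tC_hz, tD_hz] at this
      simp at this
  have hIS : inSide (N+1) L d s = ∑ m ∈ Finset.Icc a b, max (d.hz (N+1) m) 0 := by
    rw [inSide, hs, runL_sum, ← Finset.Ico_add_one_right_eq_Icc, Finset.sum_Ico_eq_sum_range]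
    rw [show b + 1 - a = cnt from rfl]
    apply Finset.sum_congr rfl
    intro j hj
    rw [Finset.mem_range] at hj
    rw [inPosEdge, inflowEdge, if_pos ⟨⟨by omega, by omega⟩, hmem (a+j) (by omega) (by omega)⟩]
    rfl
  have hOS : outSide (N+1) L d s = ∑ m ∈ Finset.Icc a b, max (-(d.hz (N+1) m)) 0 := by
    rw [outSide, hs, runL_sum, ← Finset.Ico_add_one_right_eq_Icc, Finset.sum_Ico_eq_sum_range]
    rw [show b + 1 - a = cnt from rfl]
    apply Finset.sum_congr rfl
    intro j hj
    rw [Finset.mem_range] at hj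
    rw [outPosEdge, inflowEdge, if_pos ⟨⟨by omega, by omega⟩, hmem (a+j) (by omega) (by omega)⟩]
    rfl
  obtain ⟨hinEq, houtEq⟩ := hcompat L s ⟨.up N a, ⟨by omega, by omega⟩, hL⟩ hside
  have hsum1 : ∑ m ∈ Finset.Icc a b, wDelta φ (.hz (N+1) m) =
      (∑ m ∈ Finset.Icc a b, (WW φ (tA (.hz (N+1) m)) + WW φ (tB (.hz (N+1) m)))) -
      ∑ m ∈ Finset.Icc a b, (WW φ (tC (.hz (N+1) m)) + WW φ (tD (.hz (N+1) m))) := by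
    rw [← Finset.sum_sub_distrib]
    apply Finset.sum_congr rfl
    intro m hm
    rw [wDelta_eq hfin]
    ring
  have hA0 : ∀ m ∈ Finset.Icc a b, m ≠ b →
      WW φ (tA (.hz (N+1) m)) + WW φ (tB (.hz (N+1) m)) = 0 := by
    intro m hm hmb
    rw [Finset.mem_Icc] at hm
    have hfl := hflat m (by omega) (by omega)
    rw [WW_eq_zero hφ.2 (fun l hl => by rw [tA_hz]; exact (blockB_in (by omega) hfl.1 hfl.2 hl).1),
      WW_eq_zero hφ.2 (fun l hl => by rw [tB_hz]; exact (blockB_in (by omega) hfl.1 hfl.2 hl).2)]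
    ring
  have hC0 : ∀ m ∈ Finset.Icc a b, m ≠ a →
      WW φ (tC (.hz (N+1) m)) + WW φ (tD (.hz (N+1) m)) = 0 := by
    intro m hm hma
    rw [Finset.mem_Icc] at hm
    obtain ⟨m', rfl⟩ : ∃ m', m = m' + 1 := ⟨m - 1, by omega⟩
    have hfl := hflat m' (by omega) (by omega)
    rw [WW_eq_zero hφ.2 (fun l hl => by rw [tC_hz]; exact (blockB_out (by omega) hfl.1 hfl.2 hl).1),
      WW_eq_zero hφ.2 (fun l hl => by rw [tD_hz]; exact (blockB_out (by omega) hfl.1 hfl.2 hl).2)]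
    ring
  rw [hsum1, Finset.sum_eq_single_of_mem b (Finset.mem_Icc.2 ⟨hab, le_rfl⟩) hA0,
    Finset.sum_eq_single_of_mem a (Finset.mem_Icc.2 ⟨le_rfl, hab⟩) hC0,
    ← hIW, ← hOW, hinEq, houtEq, hIS, hOS, ← Finset.sum_sub_distrib]
  apply Finset.sum_congr rfl
  intro m hm
  exact max_zero_sub_max_neg_zero_eq_self _

/-! ### decomposition of a range into maximal runs -/

lemma runsum (N : ℕ) (link : ℕ → Prop) (g h : ℕ → ℝ)
    (hruns : ∀ a b, a ≤ b → b ≤ N → (a = 0 ∨ ¬ link (a-1)) →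
      (∀ k, a ≤ k → k < b → link k) → (b = N ∨ ¬ link b) →
      ∑ m ∈ Finset.Icc a b, g m = ∑ m ∈ Finset.Icc a b, h m) :
    ∑ m ∈ Finset.range (N+1), g m = ∑ m ∈ Finset.range (N+1), h m := by
  classical
  suffices haux : ∀ j a, N + 1 - a ≤ j → (a = 0 ∨ N + 1 ≤ a ∨ ¬ link (a-1)) →
      ∑ m ∈ Finset.Ico a (N+1), g m = ∑ m ∈ Finset.Ico a (N+1), h m by
    have := haux (N+1) 0 (by omega) (Or.inl rfl)
    rw [Finset.range_eq_Ico]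
    exact this
  intro j
  induction j with
  | zero =>
      intro a hja hstart
      have hae : Finset.Ico a (N+1) = ∅ := by
        apply Finset.Ico_eq_empty
        omega
      rw [hae]
      simp
  | succ j ih =>
      intro a hja hstart
      by_cases haN' : N + 1 ≤ a
      · have hae : Finset.Ico a (N+1) = ∅ := by
          apply Finset.Ico_eq_empty
          omega
        rw [hae]; simp
      · have haN2 : a ≤ N := by omega
        have hPex : ∃ k, a ≤ k ∧ k ≤ N ∧ (k = N ∨ ¬ link k) := ⟨N, haN2, le_rfl, Or.inl rfl⟩
        set b := Nat.find hPex with hb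
        have hPb := Nat.find_spec hPex
        have hlinkmid : ∀ k, a ≤ k → k < b → link k := by
          intro k h1 h2
          by_contra hnl
          exact Nat.find_min hPex h2 ⟨h1, by omega, Or.inr hnl⟩
        have hstart' : a = 0 ∨ ¬ link (a-1) := by
          rcases hstart with h | h | h
          · exact Or.inl h
          · omega
          · exact Or.inr h
        have hrun_eq := hruns a b hPb.1 hPb.2.1 hstart' hlinkmid hPb.2.2
        have hsplit : Finset.Ico a (N+1) = Finset.Icc a b ∪ Finset.Ico (b+1) (N+1) := by
          rw [← Finset.Ico_add_one_right_eq_Icc,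
            Finset.Ico_union_Ico_eq_Ico (by omega) (by omega)]
        have hdis : Disjoint (Finset.Icc a b) (Finset.Ico (b+1) (N+1)) := by
          rw [Finset.disjoint_left]
          intro x hx hx2
          rw [Finset.mem_Icc] at hx
          rw [Finset.mem_Ico] at hx2
          omega
        have hstart2 : b + 1 = 0 ∨ N + 1 ≤ b + 1 ∨ ¬ link (b+1-1) := by
          rcases hPb.2.2 with h | h
          · right; left; omega
          · right; right; simpa using h
        rw [hsplit, Finset.sum_union hdis, Finset.sum_union hdis, hrun_eq,
          ih (b+1) (by omega) hstart2]

lemma rtg_chain {n : ℕ} {f : Flow} {base : ℕ → Tri} {a b : ℕ} (hab : a ≤ b)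
    (hmid : ∀ k, a ≤ k → k < b →
      Relation.ReflTransGen (FlatAdjTri n f) (base k) (base (k+1))) :
    Relation.ReflTransGen (FlatAdjTri n f) (base a) (base b) := by
  obtain ⟨j, rfl⟩ : ∃ j, b = a + j := ⟨b - a, by omega⟩
  clear hab
  induction j with
  | zero => exact .refl
  | succ j ih =>
      have h1 := ih (fun k h1 h2 => hmid k h1 (by omega))
      have h2 := hmid (a+j) (by omega) (by omega)
      rw [show a + (j+1) = (a+j)+1 by omega]
      exact h1.trans h2

/-- If `φ` is a weighted family of complete turnpaths in `R_f` whose entrance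
and exit weights through every side of every `f`-flatspace agree with the
inflow and outflow of the `f`-hive preserving flow class `d`, then the
nonnegative flow `d' = ∑_p φ(p)·p` on `R_f` satisfies `δ(π(d')) = δ(d)`. -/
theorem rerouted_flow_same_throughput (n : ℕ) (hn : 1 ≤ n) (lam mu nu : ℕ → ℕ)
    (hpart : PartitionData n lam mu nu)
    (f : Flow) (hf : MemB n lam mu nu f)
    (d : Flow) (hd0 : Normalized n d) (hd1 : IsFlow n d)
    (hd : HivePreserving n lam mu nu f d)
    (φ : List RVertex → ℝ) (hφ : WeightedFamily (ResidAdj n lam mu nu f) φ)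
    (hcompat : ∀ (L : Set Tri) (s : List EdgeK), IsFlatspace n f L → IsSide n L s →
      inWeight n L s φ = inSide n L d s ∧ outWeight n L s φ = outSide n L d s) :
    piThr n φ = thr n d := by
  obtain ⟨N, rfl⟩ : ∃ N, n = N + 1 := ⟨n - 1, by omega⟩
  have hIsF : IsFlow (N+1) f := hf.2.1.1
  have hfin : (Function.support φ).Finite :=
    suppφ_finite (fun y t h => resid_valid h) hφ.2
  have hright : ∑ m ∈ Finset.range (N+1), wDelta φ (.dr m m)
      = ∑ m ∈ Finset.range (N+1), d.dr m m := by
    apply runsum N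
      (fun k => Relation.ReflTransGen (FlatAdjTri (N+1) f) (.up k k) (.up (k+1) (k+1)))
    intro a b hab hbN hstart hmid hend
    apply run_right hIsF hφ hfin hcompat hab hbN hmid
    · intro a' ha' hmem'
      subst ha'
      rcases hstart with h | h
      · omega
      · apply h
        simpa using rtg_symm hmem'
    · rcases hend with h | h
      · exact Or.inl h
      · right
        intro hmem'
        apply h
        have hb : Relation.ReflTransGen (FlatAdjTri (N+1) f) (Tri.up a a) (Tri.up b b) :=
          rtg_chain hab hmid
        exact (rtg_symm hb).trans hmem'
  have hbottom : ∑ i ∈ Finset.range (N+1), wDelta φ (.hz (N+1) i)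
      = ∑ i ∈ Finset.range (N+1), d.hz (N+1) i := by
    apply runsum N
      (fun k => Relation.ReflTransGen (FlatAdjTri (N+1) f) (.up N k) (.up N (k+1)))
    intro a b hab hbN hstart hmid hend
    apply run_bottom hIsF hφ hfin hcompat hab hbN hmid
    · intro a' ha' hmem'
      subst ha'
      rcases hstart with h | h
      · omega
      · apply h
        simpa using rtg_symm hmem'
    · rcases hend with h | h
      · exact Or.inl h
      · right
        intro hmem'
        apply h
        have hb : Relation.ReflTransGen (FlatAdjTri (N+1) f) (Tri.up N a) (Tri.up N b) :=
          rtg_chain (base := fun k => Tri.up N k) hab hmid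
        exact (rtg_symm hb).trans hmem'
  rw [piThr, thr, hright, hbottom]

end LRFlows
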